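/- arXiv:1611.05979 — 7 statements merged into one kernel-verified Lean document; each statement's English description precedes it below -/
import Mathlib

section
/- For any full-rank lattice L in R^n and any two primitive sublattices L1, L2 of L, one has rank(L1) + rank(L2) = rank(L1 ∩ L2) + rank(L1 + L2), and det(L1 ∩ L2) * det(L1 + L2) <= det(L1) * det(L2), where by convention det({0}) = 1. -/
open scoped Real Pointwise
open MeasureTheory Set

set_option linter.unusedSectionVars false
set_option maxHeartbeats 1000000
noncomputable section

variable {E : Type*} [NormedAddCommGroup E] [InnerProductSpace ℝ E]

/-- `A` is (the point set of) a lattice of some rank `d` with determinant `v`,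
computed as `sqrt (det (Bᵀ B))` for a `ℤ`-basis `b` that is `ℝ`-linearly independent. -/
def latHasDet (A : Set E) (v : ℝ) : Prop :=
  ∃ (d : ℕ) (b : Fin d → E), LinearIndependent ℝ b ∧
    A = (Submodule.span ℤ (Set.range b) : Set E) ∧
    v = Real.sqrt (Matrix.det (Matrix.of fun i j : Fin d => (inner ℝ (b i) (b j) : ℝ)))

/-- `L` is a lattice of rank `d` : it is generated over `ℤ` by `d` 
`ℝ`-linearly independent vectors. -/
def IsLatticeOfRank (L : Submodule ℤ E) (d : ℕ) : Prop :=
  ∃ b : Fin d → E, LinearIndependent ℝ b ∧ L = Submodule.span ℤ (Set.range b)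

/-- Gaussian mass of a set `A` with parameter `s`. -/
def rhoS (s : ℝ) (A : Set E) : ℝ := ∑' x : A, Real.exp (-π * ‖(x : E)‖ ^ 2 / s ^ 2)

/-- A lattice (given by its point set) is stable if it has determinant one and every
sublattice has determinant at least one. -/
def IsStable (A : Set E) : Prop :=
  latHasDet A 1 ∧
    ∀ M : Submodule ℤ E, (M : Set E) ⊆ A → ∀ v, latHasDet (M : Set E) v → 1 ≤ v

/-- The Voronoi cell of a lattice. -/
def voronoi (L : Submodule ℤ E) : Set E := {x | ∀ y ∈ L, ‖x‖ ≤ ‖y - x‖}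

/-- The covering radius of a lattice: the furthest distance from a point of the span
of the lattice to the lattice. -/
def covRad (L : Submodule ℤ E) : ℝ :=
  ⨆ t : Submodule.span ℝ (L : Set E), ⨅ y : L, ‖(t : E) - (y : E)‖

/-- The dual lattice, as a set. -/
def dualSet (L : Submodule ℤ E) : Set E :=
  {w | ∀ y ∈ L, ∃ k : ℤ, (inner ℝ w y : ℝ) = (k : ℝ)}

/-- The Gaussian measure of `S/s`. -/
def gauss {n : ℕ} (s : ℝ) (S : Set (EuclideanSpace ℝ (Fin n))) : ℝ :=
  ∫ x in s⁻¹ • S, Real.exp (-π * ‖x‖ ^ 2)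

/-- A fundamental body for a lattice with point set `L`: a convex body `K` such that
`K + L` tiles space, i.e. `vol K = det L` and the interior of `K` is disjoint from every
nontrivial lattice translate of `K`. -/
def IsFundBody {n : ℕ} (L : Set (EuclideanSpace ℝ (Fin n)))
    (K : Set (EuclideanSpace ℝ (Fin n))) : Prop :=
  Convex ℝ K ∧ IsCompact K ∧ (interior K).Nonempty ∧
    (∀ y ∈ L, y ≠ 0 → interior K ∩ ((fun x => x + y) '' K) = ∅) ∧
    ∀ v, latHasDet L v → volume K = ENNReal.ofReal v

/-- Concatenation of Euclidean vectors. -/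
def appendE {n m : ℕ} (x : EuclideanSpace ℝ (Fin n)) (y : EuclideanSpace ℝ (Fin m)) :
    EuclideanSpace ℝ (Fin (n + m)) :=
  WithLp.toLp 2 (fun i => Fin.addCases (motive := fun _ => ℝ) (fun j => x j) (fun j => y j) i)

namespace UCaux

open Submodule Set Matrix
open scoped Matrix


local notation "⟪" x ", " y "⟫" => @inner ℝ _ _ x y

/-- Gram matrix of a family of vectors. -/
def gram {ι : Type*} (v : ι → E) : Matrix ι ι ℝ := Matrix.of fun i j => ⟪v i, v j⟫

lemma gram_dot {ι : Type*} [Fintype ι] (v : ι → E) (x : ι → ℝ) :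
    dotProduct x ((gram v) *ᵥ x) = ‖∑ i, x i • v i‖ ^ 2 := by
  rw [← real_inner_self_eq_norm_sq, sum_inner]
  simp only [dotProduct, Matrix.mulVec, gram, Matrix.of_apply]
  refine Finset.sum_congr rfl fun i _ => ?_
  rw [real_inner_smul_left, inner_sum]
  simp_rw [real_inner_smul_right]
  congr 1
  exact Finset.sum_congr rfl fun j _ => (mul_comm _ _)

lemma gram_posSemidef {ι : Type*} [Fintype ι] (v : ι → E) : (gram v).PosSemidef := by
  refine Matrix.posSemidef_iff_dotProduct_mulVec.mpr ⟨?_, ?_⟩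
  · ext i j
    simp [gram, Matrix.conjTranspose_apply, real_inner_comm]
  · intro x
    have hx : star x = x := by funext i; simp
    rw [hx, gram_dot]
    positivity

lemma posSemidef_det_nonneg {ι : Type*} [Fintype ι] [DecidableEq ι] {A : Matrix ι ι ℝ}
    (hA : A.PosSemidef) : 0 ≤ A.det := by
  rw [hA.isHermitian.det_eq_prod_eigenvalues]
  exact Finset.prod_nonneg fun i _ => by simpa using hA.eigenvalues_nonneg i

lemma gram_det_nonneg {ι : Type*} [Fintype ι] [DecidableEq ι] (v : ι → E) :
    0 ≤ (gram v).det := posSemidef_det_nonneg (gram_posSemidef v)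

lemma gram_det_ne_zero {ι : Type*} [Fintype ι] [DecidableEq ι] {v : ι → E}
    (hv : LinearIndependent ℝ v) : (gram v).det ≠ 0 := by
  intro h
  obtain ⟨x, hx, hmx⟩ := (Matrix.exists_mulVec_eq_zero_iff).2 h
  have h2 : dotProduct x ((gram v) *ᵥ x) = 0 := by rw [hmx, dotProduct_zero]
  rw [gram_dot] at h2
  have h3 : ∑ i, x i • v i = 0 := by
    have := sq_eq_zero_iff.mp h2
    simpa using this
  exact hx (funext fun i => Fintype.linearIndependent_iff.mp hv x h3 i)

/-- det is monotone under adding a PSD matrix. -/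
lemma det_le_det_add {ι : Type*} [Fintype ι] [DecidableEq ι] {A B : Matrix ι ι ℝ}
    (hA : A.PosSemidef) (hB : B.PosSemidef) : A.det ≤ (A + B).det := by
  rcases eq_or_ne A.det 0 with h0 | h0
  · rw [h0]; exact posSemidef_det_nonneg (hA.add hB)
  · -- A = Cᴴ * C with C invertible
    obtain ⟨C, hC⟩ : ∃ C : Matrix ι ι ℝ, A = Cᴴ * C := by
      open scoped MatrixOrder in
      exact CStarAlgebra.nonneg_iff_eq_star_mul_self.mp hA.nonneg
    have hCdet : IsUnit C.det := by
      have : A.det = C.det * C.det := by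
        rw [hC, Matrix.det_mul, Matrix.det_conjTranspose]
        simp [star]
      rw [isUnit_iff_ne_zero]
      intro h; rw [this, h, mul_zero] at h0; exact h0 rfl
    haveI := C.invertibleOfIsUnitDet hCdet
    set S : Matrix ι ι ℝ := (C⁻¹)ᴴ * B * C⁻¹ with hS
    have hSpsd : S.PosSemidef := hB.conjTranspose_mul_mul_same C⁻¹
    have h1 : Cᴴ * (C⁻¹)ᴴ = 1 := by
      rw [← Matrix.conjTranspose_mul, Matrix.nonsing_inv_mul C hCdet, Matrix.conjTranspose_one]
    have h2 : C⁻¹ * C = 1 := Matrix.nonsing_inv_mul C hCdet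
    have key : A + B = Cᴴ * (1 + S) * C := by
      rw [Matrix.mul_add, Matrix.add_mul, Matrix.mul_one, ← hC, hS]
      congr 1
      have h3 : Cᴴ * ((C⁻¹)ᴴ * B * C⁻¹) * C = (Cᴴ * (C⁻¹)ᴴ) * B * (C⁻¹ * C) := by
        simp only [Matrix.mul_assoc]
      rw [h3, h1, h2, Matrix.one_mul, Matrix.mul_one]
    have hone : (1 : ℝ) ≤ (1 + S).det := by
      have hermS := hSpsd.isHermitian
      have spec := hermS.spectral_theorem
      have : (1 : Matrix ι ι ℝ) + S =
          (hermS.eigenvectorUnitary : Matrix ι ι ℝ) *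
            (1 + Matrix.diagonal (RCLike.ofReal ∘ hermS.eigenvalues)) *
            (star (hermS.eigenvectorUnitary : Matrix ι ι ℝ)) := by
        rw [Matrix.mul_add, Matrix.add_mul, Matrix.mul_one]
        conv_lhs => rw [spec]
        congr 1
        exact ((Matrix.mem_unitaryGroup_iff).mp hermS.eigenvectorUnitary.2).symm
      rw [this, Matrix.det_mul, Matrix.det_mul, mul_comm, ← mul_assoc]
      have hu : (star (hermS.eigenvectorUnitary : Matrix ι ι ℝ)).det *
          (hermS.eigenvectorUnitary : Matrix ι ι ℝ).det = 1 := by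
        rw [← Matrix.det_mul, (Matrix.mem_unitaryGroup_iff').mp hermS.eigenvectorUnitary.2,
          Matrix.det_one]
      rw [hu, one_mul]
      have : (1 : Matrix ι ι ℝ) + Matrix.diagonal (RCLike.ofReal ∘ hermS.eigenvalues) =
          Matrix.diagonal (fun i => 1 + hermS.eigenvalues i) := by
        rw [← Matrix.diagonal_one, Matrix.diagonal_add]
        rfl
      rw [this, Matrix.det_diagonal]
      calc (1:ℝ) = ∏ _i : ι, (1:ℝ) := by simp
        _ ≤ ∏ i, (1 + hermS.eigenvalues i) := by
            refine Finset.prod_le_prod (fun i _ => zero_le_one) (fun i _ => ?_)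
            have := hSpsd.eigenvalues_nonneg i
            linarith
    have hAd : (0:ℝ) < A.det := lt_of_le_of_ne (posSemidef_det_nonneg hA) (Ne.symm h0)
    have hdd : (A + B).det = A.det * (1 + S).det := by
      have hcc : Cᴴ.det * C.det = A.det := by rw [← Matrix.det_mul, ← hC]
      rw [key, Matrix.det_mul, Matrix.det_mul, ← hcc]; ring
    nlinarith

section transfer

variable {ι ι' : Type*} [Fintype ι] [Fintype ι'] [DecidableEq ι] [DecidableEq ι']

lemma zlin {κ : Type*} {f : κ → E} (hf : LinearIndependent ℝ f) : LinearIndependent ℤ f :=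
  hf.restrict_scalars (smul_left_injective ℤ (one_ne_zero : (1:ℝ) ≠ 0))

lemma exists_int_matrix {f : ι → E} {g : ι' → E}
    (hspan : span ℤ (range f) ≤ span ℤ (range g)) :
    ∃ U : Matrix ι ι' ℤ, ∀ i, f i = ∑ j, U i j • g j := by
  have h : ∀ i, ∃ c : ι' → ℤ, ∑ j, c j • g j = f i := fun i =>
    (mem_span_range_iff_exists_fun ℤ).1 (hspan (subset_span ⟨i, rfl⟩))
  choose U hU using h
  exact ⟨Matrix.of U, fun i => (hU i).symm⟩

lemma transfer_aux {f g : ι → E} (hg : LinearIndependent ℝ g)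
    (hspan : span ℤ (range f) = span ℤ (range g)) :
    LinearIndependent ℝ f ∧ (gram f).det = (gram g).det := by
  obtain ⟨U, hU⟩ := exists_int_matrix (le_of_eq hspan)
  obtain ⟨V, hV⟩ := exists_int_matrix (le_of_eq hspan.symm)
  have hgZ : LinearIndependent ℤ g := zlin hg
  have hVU : V * U = 1 := by
    ext i k
    have hrep : ∑ k, (V * U) i k • g k = g i := by
      conv_rhs => rw [hV i]
      simp_rw [hU, Finset.smul_sum, smul_smul]
      rw [Finset.sum_comm]
      refine Finset.sum_congr rfl fun k _ => ?_
      rw [← Finset.sum_smul, Matrix.mul_apply]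
    have h1 : ∑ k, (1 : Matrix ι ι ℤ) i k • g k = g i := by
      simp [Matrix.one_apply, ite_smul, Finset.sum_ite_eq]
    have h0 : ∑ k, ((V * U) i k - (1 : Matrix ι ι ℤ) i k) • g k = 0 := by
      simp_rw [sub_smul, Finset.sum_sub_distrib, hrep, h1, sub_self]
    have := Fintype.linearIndependent_iff.mp hgZ _ h0 k
    omega
  have hUV : U * V = 1 := mul_eq_one_comm.mp hVU
  set U' : Matrix ι ι ℝ := U.map ⇑(Int.castRingHom ℝ) with hU'def
  set V' : Matrix ι ι ℝ := V.map ⇑(Int.castRingHom ℝ) with hV'def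
  have hU' : ∀ i, f i = ∑ j, U' i j • g j := by
    intro i
    rw [hU i]
    exact Finset.sum_congr rfl fun j _ => (Int.cast_smul_eq_zsmul ℝ _ _).symm
  have hUV' : U' * V' = 1 := by
    rw [hU'def, hV'def, ← Matrix.map_mul, hUV]
    simp
  -- linear independence of f
  have hfli : LinearIndependent ℝ f := by
    rw [Fintype.linearIndependent_iff]
    intro t ht
    have hsum : ∑ j, (∑ i, t i * U' i j) • g j = 0 := by
      rw [← ht]
      simp_rw [hU', Finset.smul_sum, smul_smul]
      rw [Finset.sum_comm]
      refine Finset.sum_congr rfl fun j _ => ?_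
      rw [← Finset.sum_smul]
    have hs : ∀ j, (∑ i, t i * U' i j) = 0 :=
      Fintype.linearIndependent_iff.mp hg _ hsum
    intro k
    have : t k = ∑ j, (∑ i, t i * U' i j) * V' j k := by
      simp_rw [Finset.sum_mul, mul_assoc]
      rw [Finset.sum_comm]
      simp_rw [← Finset.mul_sum]
      have : ∀ i, ∑ j, U' i j * V' j k = (1 : Matrix ι ι ℝ) i k := by
        intro i; rw [← Matrix.mul_apply, hUV']
      simp_rw [this]
      simp [Matrix.one_apply, Finset.sum_ite_eq]
    rw [this]
    simp [hs]
  refine ⟨hfli, ?_⟩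
  -- gram relation
  have hgram : gram f = U' * gram g * U'ᵀ := by
    ext i j
    have lhs : gram f i j = ∑ k, ∑ l, U' i k * U' j l * ⟪g k, g l⟫ := by
      show ⟪f i, f j⟫ = _
      rw [hU' i, hU' j, sum_inner]
      refine Finset.sum_congr rfl fun k _ => ?_
      rw [real_inner_smul_left, inner_sum, Finset.mul_sum]
      refine Finset.sum_congr rfl fun l _ => ?_
      rw [real_inner_smul_right]; ring
    have rhs : (U' * gram g * U'ᵀ) i j = ∑ l, ∑ k, U' i k * U' j l * ⟪g k, g l⟫ := by
      rw [Matrix.mul_apply]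
      refine Finset.sum_congr rfl fun l _ => ?_
      rw [Matrix.mul_apply, Matrix.transpose_apply, Finset.sum_mul]
      refine Finset.sum_congr rfl fun k _ => ?_
      show U' i k * ⟪g k, g l⟫ * U' j l = U' i k * U' j l * ⟪g k, g l⟫
      ring
    rw [lhs, rhs, Finset.sum_comm]
  have hdetU : U'.det = ((U.det : ℤ) : ℝ) := ((Int.castRingHom ℝ).map_det U).symm
  have hdetV : V'.det = ((V.det : ℤ) : ℝ) := ((Int.castRingHom ℝ).map_det V).symm
  have hdUV : U.det * V.det = 1 := by
    have := congrArg Matrix.det hUV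
    rwa [Matrix.det_mul, Matrix.det_one] at this
  have hsq : U'.det ^ 2 = 1 := by
    rcases Int.isUnit_iff.mp (IsUnit.of_mul_eq_one _ hdUV) with h | h <;>
      rw [hdetU, h] <;> norm_num
  rw [hgram, Matrix.det_mul, Matrix.det_mul, Matrix.det_transpose]
  have : U'.det * (gram g).det * U'.det = (U'.det ^ 2) * (gram g).det := by ring
  rw [this, hsq, one_mul]

lemma card_eq_of_span_eq {f : ι → E} {g : ι' → E} (hf : LinearIndependent ℝ f)
    (hg : LinearIndependent ℝ g) (hspan : span ℤ (range f) = span ℤ (range g)) :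
    Fintype.card ι = Fintype.card ι' := by
  have bf : Module.Basis ι ℤ (span ℤ (range f)) := Module.Basis.span (zlin hf)
  have bg : Module.Basis ι' ℤ (span ℤ (range g)) := Module.Basis.span (zlin hg)
  exact Fintype.card_congr ((bf.map (LinearEquiv.ofEq _ _ hspan)).indexEquiv bg)

lemma transfer {f : ι → E} {g : ι' → E} (hg : LinearIndependent ℝ g)
    (hcard : Fintype.card ι = Fintype.card ι')
    (hspan : span ℤ (range f) = span ℤ (range g)) :
    LinearIndependent ℝ f ∧ (gram f).det = (gram g).det := by
  set e : ι ≃ ι' := Fintype.equivOfCardEq hcard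
  have hge : LinearIndependent ℝ (g ∘ e) := hg.comp e e.injective
  have hrange : range (g ∘ e) = range g := e.surjective.range_comp g
  have h := transfer_aux (f := f) (g := g ∘ e) hge (by rw [hrange, hspan])
  refine ⟨h.1, h.2.trans ?_⟩
  have : gram (g ∘ e) = (gram g).submatrix e e := rfl
  rw [this, Matrix.det_submatrix_equiv_self]

end transfer

section adapted

lemma rank_unique {N : Submodule ℤ E} {d : ℕ} (h : IsLatticeOfRank N d) {ι : Type*} [Fintype ι] [DecidableEq ι]
    {g : ι → E} (hg : LinearIndependent ℝ g) (hspan : N = span ℤ (range g)) :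
    d = Fintype.card ι := by
  obtain ⟨b, hb, hNb⟩ := h
  have := card_eq_of_span_eq hb hg (hNb.symm.trans hspan)
  simpa using this

lemma det_unique {N : Submodule ℤ E} {v : ℝ} (h : latHasDet (N : Set E) v) {ι : Type*}
    [Fintype ι] [DecidableEq ι] {g : ι → E} (hg : LinearIndependent ℝ g)
    (hspan : N = span ℤ (range g)) : v = Real.sqrt (gram g).det := by
  obtain ⟨d, b, hb, hA, hv⟩ := h
  have hNb : N = span ℤ (range b) := SetLike.coe_injective hA
  have hsp : span ℤ (range b) = span ℤ (range g) := hNb.symm.trans hspan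
  have hcard := card_eq_of_span_eq hb hg hsp
  have hdet := (transfer (f := b) hg hcard hsp).2
  rw [hv]
  congr 1

lemma exists_adapted {N M : Submodule ℤ E} {d : ℕ} (hN : IsLatticeOfRank N d) (hMN : M ≤ N)
    (hprim : ∀ x ∈ N, x ∈ span ℝ (M : Set E) → x ∈ M) :
    ∃ (k l : ℕ) (m : Fin k → E) (u : Fin l → E),
      LinearIndependent ℝ (Sum.elim m u) ∧ N = span ℤ (range (Sum.elim m u)) ∧
      M = span ℤ (range m) := by
  obtain ⟨b, hb, hNb⟩ := hN
  have bZ : LinearIndependent ℤ b := zlin hb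
  let bb : Module.Basis (Fin d) ℤ N := (Module.Basis.span bZ).map (LinearEquiv.ofEq _ _ hNb.symm)
  obtain ⟨k, o, hko, bO, bN, a, ha⟩ :=
    Submodule.exists_smith_normal_form_of_le bb (M.comap N.subtype) ⊤ le_top
  let cO : Module.Basis (Fin o) ℤ N := bO.map (Submodule.topEquiv)
  let c0 : Fin o → E := fun i => ((cO i : N) : E)
  -- span of c0 is N
  have hspan0 : span ℤ (range c0) = N := by
    have h1 : span ℤ (range cO) = (⊤ : Submodule ℤ N) := cO.span_eq
    have h2 : Submodule.map N.subtype (span ℤ (range cO)) = span ℤ (range c0) := by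
      rw [Submodule.map_span]
      congr 1
      rw [← Set.range_comp]
      rfl
    rw [h1] at h2
    rw [← h2, Submodule.map_subtype_top]
  -- c0 is ℝ-linearly independent
  have hcard : Fintype.card (Fin o) = Fintype.card (Fin d) :=
    Fintype.card_congr (cO.indexEquiv bb)
  have hc0li : LinearIndependent ℝ c0 :=
    (transfer hb hcard (by rw [hspan0, hNb])).1
  -- the two pieces
  set m : Fin k → E := fun i => c0 (Fin.castLE hko i) with hm
  set u : Fin (o - k) → E := fun j => c0 ⟨k + j.val, by omega⟩ with hu
  have hrange : range (Sum.elim m u) = range c0 := by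
    ext x
    constructor
    · rintro ⟨(i | j), rfl⟩
      · exact ⟨_, rfl⟩
      · exact ⟨_, rfl⟩
    · rintro ⟨t, rfl⟩
      by_cases ht : (t : ℕ) < k
      · exact ⟨Sum.inl ⟨t, ht⟩, rfl⟩
      · refine ⟨Sum.inr ⟨t - k, by omega⟩, ?_⟩
        simp only [Sum.elim_inr, hu]
        congr 1
        exact Fin.ext (by show k + ((t : ℕ) - k) = t; omega)
  have hli : LinearIndependent ℝ (Sum.elim m u) := by
    set e : Fin k ⊕ Fin (o - k) → Fin o :=
      Sum.elim (Fin.castLE hko) (fun j => ⟨k + j.val, by omega⟩) with he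
    have heinj : Function.Injective e := by
      rintro (i | i) (j | j) h <;> simp only [he, Sum.elim_inl, Sum.elim_inr] at h <;>
        [skip; skip; skip; skip] <;>
      · first
        | (exact congrArg Sum.inl (Fin.ext (by simpa using congrArg Fin.val h)))
        | (exact congrArg Sum.inr (Fin.ext (by have := congrArg Fin.val h; simp at this; omega)))
        | (exfalso; have := congrArg Fin.val h; simp at this; omega)
    have : (c0 ∘ e) = Sum.elim m u := by
      funext x; cases x <;> rfl
    exact this ▸ hc0li.comp e heinj
  refine ⟨k, o - k, m, u, hli, by rw [hrange, hspan0], ?_⟩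
  -- M = span of m
  have hMmap : Submodule.map N.subtype (M.comap N.subtype) = M := by
    rw [Submodule.map_comap_subtype]
    exact inf_eq_right.mpr hMN
  have hMspan : M = span ℤ (range fun i => ((bN i : N) : E)) := by
    have s1 : Submodule.map (M.comap N.subtype).subtype (span ℤ (range bN))
        = span ℤ (range fun i => (bN i : N)) := by
      rw [Submodule.map_span]
      congr 1
      rw [← Set.range_comp]
      rfl
    rw [bN.span_eq, Submodule.map_subtype_top] at s1
    have s2 : Submodule.map N.subtype (span ℤ (range fun i => (bN i : N)))
        = span ℤ (range fun i => ((bN i : N) : E)) := by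
      rw [Submodule.map_span]
      congr 1
      rw [← Set.range_comp]
      rfl
    rw [← s1] at s2
    exact (hMmap.symm.trans s2)
  have hbOc : ∀ j, ((bO j : N) : E) = c0 j := fun j => rfl
  have hae : ∀ i, ((bN i : N) : E) = a i • m i := by
    intro i
    have h1 : ((bN i : N) : E) = ((( a i • (bO (Fin.castLE hko i)) : N) : E)) := by
      rw [ha i]
    rw [h1]
    have : ((( a i • (bO (Fin.castLE hko i)) : N) : E)) =
        a i • (((bO (Fin.castLE hko i) : N)) : E) := by simp
    rw [this, hbOc]
  have hane : ∀ i, a i ≠ 0 := by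
    intro i h0
    have : ((bN i : N) : E) = 0 := by rw [hae i, h0, zero_smul]
    have h1 : (bN i : N) = 0 := by exact_mod_cast this
    have h2 : bN i = 0 := by exact_mod_cast h1
    exact bN.ne_zero i h2
  have haem : ∀ i, a i • m i ∈ M := by
    intro i
    rw [← hae i]
    exact (bN i).2
  have hmM : ∀ i, m i ∈ M := by
    intro i
    refine hprim (m i) ?_ ?_
    · exact SetLike.coe_mem (cO (Fin.castLE hko i))
    · have h1 : a i • m i ∈ span ℝ (M : Set E) := subset_span (haem i)
      have h2 : ((a i : ℝ)) • m i ∈ span ℝ (M : Set E) := by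
        rwa [Int.cast_smul_eq_zsmul]
      have h3 : ((a i : ℝ))⁻¹ • (((a i : ℝ)) • m i) ∈ span ℝ (M : Set E) :=
        Submodule.smul_mem _ _ h2
      rwa [inv_smul_smul₀ (by exact_mod_cast hane i) (m i)] at h3
  refine le_antisymm ?_ ?_
  · rw [hMspan]
    rw [Submodule.span_le]
    rintro x ⟨i, rfl⟩
    have : a i • m i ∈ span ℤ (range m) :=
      Submodule.smul_mem _ _ (subset_span ⟨i, rfl⟩)
    simpa [← hae i] using this
  · rw [Submodule.span_le]
    rintro x ⟨i, rfl⟩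
    exact hmM i

end adapted

section proj

variable [FiniteDimensional ℝ E]

/-- Orthogonal complement projection as a linear map. -/
def pr (W : Submodule ℝ E) : E →ₗ[ℝ] E :=
  LinearMap.id - W.subtype ∘ₗ (orthogonalProjection W).toLinearMap

lemma pr_apply (W : Submodule ℝ E) (x : E) : pr W x = x - orthogonalProjection W x := rfl

lemma pr_mem_orth (W : Submodule ℝ E) (x : E) : pr W x ∈ Wᗮ :=
  W.sub_starProjection_mem_orthogonal x

lemma sub_pr_mem (W : Submodule ℝ E) (x : E) : x - pr W x ∈ W := by
  rw [pr_apply]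
  simp only [sub_sub_cancel]
  exact SetLike.coe_mem _

lemma pr_eq_zero_of_mem {W : Submodule ℝ E} {x : E} (hx : x ∈ W) : pr W x = 0 := by
  rw [pr_apply, sub_eq_zero]
  exact (W.starProjection_eq_self_iff.mpr hx).symm

lemma mem_of_pr_eq_zero {W : Submodule ℝ E} {x : E} (hx : pr W x = 0) : x ∈ W := by
  have : x - pr W x ∈ W := sub_pr_mem W x
  rwa [hx, sub_zero] at this

lemma inner_pr_left (W : Submodule ℝ E) (x y : E) : ⟪pr W x, pr W y⟫ = ⟪x, pr W y⟫ := by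
  have h0 : ⟪x - pr W x, pr W y⟫ = 0 :=
    Submodule.inner_right_of_mem_orthogonal (sub_pr_mem W x) (pr_mem_orth W y)
  rw [inner_sub_left] at h0
  linarith

lemma inner_zero_of_forall_gen {ι : Type*} [Fintype ι] {m : ι → E} {z : E}
    (hz : z ∈ span ℝ (range m)) (h : ∀ i, ⟪m i, z⟫ = 0) : z = 0 := by
  have key : ∀ w ∈ span ℝ (range m), ⟪w, z⟫ = 0 := by
    intro w hw
    induction hw using Submodule.span_induction with
    | mem w hw => obtain ⟨i, rfl⟩ := hw; exact h i
    | zero => exact inner_zero_left z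
    | add w₁ w₂ _ _ h1 h2 => rw [inner_add_left, h1, h2, add_zero]
    | smul c w _ hw => rw [real_inner_smul_left, hw, mul_zero]
  exact inner_self_eq_zero.mp (key z hz)

lemma gram_split {κ : Type*} (V : Submodule ℝ E) (w : κ → E) :
    gram w = gram (fun j => pr V (w j)) + gram (fun j => w j - pr V (w j)) := by
  ext i j
  show ⟪w i, w j⟫ = ⟪pr V (w i), pr V (w j)⟫ + ⟪w i - pr V (w i), w j - pr V (w j)⟫
  have e1 : w i = pr V (w i) + (w i - pr V (w i)) := by abel
  have e2 : w j = pr V (w j) + (w j - pr V (w j)) := by abel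
  have c1 : ⟪pr V (w i), w j - pr V (w j)⟫ = 0 := by
    rw [real_inner_comm]
    exact Submodule.inner_right_of_mem_orthogonal (sub_pr_mem V (w j)) (pr_mem_orth V (w i))
  have c2 : ⟪w i - pr V (w i), pr V (w j)⟫ = 0 :=
    Submodule.inner_right_of_mem_orthogonal (sub_pr_mem V (w i)) (pr_mem_orth V (w j))
  conv_lhs => rw [e1, e2]
  rw [inner_add_left, inner_add_right, inner_add_right, c1, c2]
  ring

lemma gram_pr_det_le {κ : Type*} [Fintype κ] [DecidableEq κ] (V : Submodule ℝ E) (w : κ → E) :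
    (gram (fun j => pr V (w j))).det ≤ (gram w).det := by
  rw [gram_split V w]
  exact det_le_det_add (gram_posSemidef _) (gram_posSemidef _)

lemma gram_factor {ι κ : Type*} [Fintype ι] [Fintype κ] [DecidableEq ι] [DecidableEq κ]
    {m : ι → E} {u : κ → E} (h : LinearIndependent ℝ (Sum.elim m u)) :
    LinearIndependent ℝ (fun j => pr (span ℝ (range m)) (u j)) ∧
    (gram (Sum.elim m u)).det =
      (gram m).det * (gram fun j => pr (span ℝ (range m)) (u j)).det := by
  set W := span ℝ (range m) with hW
  have hm : LinearIndependent ℝ m := by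
    have := h.comp Sum.inl Sum.inl_injective
    exact this
  have hAdet : (gram m).det ≠ 0 := gram_det_ne_zero hm
  haveI : Invertible (gram m) := (gram m).invertibleOfIsUnitDet (isUnit_iff_ne_zero.mpr hAdet)
  set A := gram m with hA
  set B : Matrix ι κ ℝ := Matrix.of (fun i j => ⟪m i, u j⟫) with hB
  -- coordinates of the projections
  have hcoord : ∀ j, u j - pr W (u j) = ∑ l, (A⁻¹ * B) l j • m l := by
    intro j
    have hz : (u j - pr W (u j)) - ∑ l, (A⁻¹ * B) l j • m l ∈ W := by
      refine Submodule.sub_mem _ (sub_pr_mem W (u j)) ?_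
      exact Submodule.sum_mem _ fun l _ => Submodule.smul_mem _ _ (subset_span ⟨l, rfl⟩)
    have hinner : ∀ i, ⟪m i, (u j - pr W (u j)) - ∑ l, (A⁻¹ * B) l j • m l⟫ = 0 := by
      intro i
      rw [inner_sub_right, inner_sub_right]
      have h1 : ⟪m i, pr W (u j)⟫ = 0 :=
        Submodule.inner_right_of_mem_orthogonal
          (Submodule.subset_span (Set.mem_range_self i)) (pr_mem_orth W (u j))
      have h2 : ⟪m i, ∑ l, (A⁻¹ * B) l j • m l⟫ = (A * (A⁻¹ * B)) i j := by
        rw [inner_sum, Matrix.mul_apply]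
        refine Finset.sum_congr rfl fun l _ => ?_
        rw [real_inner_smul_right]
        show (A⁻¹ * B) l j * ⟪m i, m l⟫ = ⟪m i, m l⟫ * (A⁻¹ * B) l j
        ring
      rw [h1, h2, ← Matrix.mul_assoc, Matrix.mul_inv_of_invertible, Matrix.one_mul]
      show ⟪m i, u j⟫ - 0 - B i j = 0
      simp [hB]
    exact sub_eq_zero.mp (inner_zero_of_forall_gen hz hinner)
  -- Gram of projections equals the Schur complement
  have hgram2 : gram (fun j => pr W (u j)) = gram u - Bᵀ * A⁻¹ * B := by
    ext i j
    show ⟪pr W (u i), pr W (u j)⟫ = ⟪u i, u j⟫ - (Bᵀ * A⁻¹ * B) i j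
    rw [inner_pr_left]
    have e1 : ⟪u i, pr W (u j)⟫ = ⟪u i, u j⟫ - ⟪u i, u j - pr W (u j)⟫ := by
      rw [inner_sub_right]; ring
    rw [e1, hcoord j]
    congr 1
    rw [inner_sum, Matrix.mul_assoc, Matrix.mul_apply]
    refine Finset.sum_congr rfl fun l _ => ?_
    rw [real_inner_smul_right, Matrix.transpose_apply]
    show (A⁻¹ * B) l j * ⟪u i, m l⟫ = B l i * (A⁻¹ * B) l j
    rw [real_inner_comm]
    show (A⁻¹ * B) l j * B l i = B l i * (A⁻¹ * B) l j
    ring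
  have hblock : gram (Sum.elim m u) = Matrix.fromBlocks A B Bᵀ (gram u) := by
    ext (i | i) (j | j)
    · rfl
    · rfl
    · show ⟪u i, m j⟫ = Bᵀ i j
      rw [Matrix.transpose_apply, real_inner_comm]
      rfl
    · rfl
  have hdet : (gram (Sum.elim m u)).det =
      (gram m).det * (gram fun j => pr (span ℝ (range m)) (u j)).det := by
    rw [hblock, Matrix.det_fromBlocks₁₁, Matrix.invOf_eq_nonsing_inv, ← hW, hgram2, ← hA]
  refine ⟨?_, hdet⟩
  rw [Fintype.linearIndependent_iff]
  intro t ht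
  have hprz : pr W (∑ j, t j • u j) = 0 := by
    rw [map_sum]
    simp_rw [_root_.map_smul]
    exact ht
  have hzW : (∑ j, t j • u j) ∈ W := mem_of_pr_eq_zero hprz
  obtain ⟨r, hr⟩ := (mem_span_range_iff_exists_fun ℝ).1 hzW
  have hcomb : ∑ x : ι ⊕ κ, (Sum.elim r (fun j => -(t j))) x • (Sum.elim m u) x = 0 := by
    rw [Fintype.sum_sum_type]
    simp only [Sum.elim_inl, Sum.elim_inr, neg_smul]
    rw [hr, Finset.sum_neg_distrib]
    abel
  intro j
  have := Fintype.linearIndependent_iff.mp h _ hcomb (Sum.inr j)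
  simpa using this

end proj

section rankq

variable [Module ℚ E] [IsScalarTower ℚ ℝ E]

lemma qlin {κ : Type*} {f : κ → E} (hf : LinearIndependent ℝ f) : LinearIndependent ℚ f :=
  hf.restrict_scalars (smul_left_injective ℚ (one_ne_zero : (1:ℝ) ≠ 0))

lemma finrank_spanq {N : Submodule ℤ E} {d : ℕ} (hN : IsLatticeOfRank N d) :
    Module.finrank ℚ (span ℚ (N : Set E)) = d := by
  obtain ⟨b, hb, hNb⟩ := hN
  rw [hNb, Submodule.span_span_of_tower]
  simpa using finrank_span_eq_card (qlin hb)

lemma exists_int_smul_mem {N : Submodule ℤ E} {x : E} (hx : x ∈ span ℚ (N : Set E)) :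
    ∃ c : ℤ, c ≠ 0 ∧ c • x ∈ N := by
  induction hx using Submodule.span_induction with
  | mem y hy => exact ⟨1, one_ne_zero, by simpa using hy⟩
  | zero => exact ⟨1, one_ne_zero, by simp⟩
  | add y z _ _ hy hz =>
      obtain ⟨c, hc, hcy⟩ := hy
      obtain ⟨e, he, hez⟩ := hz
      refine ⟨c * e, mul_ne_zero hc he, ?_⟩
      rw [smul_add]
      have hh1 : (c * e) • y = e • (c • y) := by rw [mul_comm, mul_smul]
      have hh2 : (c * e) • z = c • (e • z) := mul_smul c e z
      rw [hh1, hh2]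
      exact N.add_mem (N.smul_mem e hcy) (N.smul_mem c hez)
  | smul q y _ hy =>
      obtain ⟨c, hc, hcy⟩ := hy
      have hdQ : ((q.den : ℚ)) ≠ 0 := by
        exact_mod_cast q.den_nz
      refine ⟨(q.den : ℤ) * c, mul_ne_zero (by exact_mod_cast q.den_nz) hc, ?_⟩
      have hden : ((q.den : ℤ)) • (q • y) = q.num • y := by
        rw [← Int.cast_smul_eq_zsmul ℚ ((q.den : ℤ)), ← Int.cast_smul_eq_zsmul ℚ q.num,
          smul_smul]
        congr 1
        push_cast
        calc (q.den : ℚ) * q = (q.den : ℚ) * ((q.num : ℚ) / (q.den : ℚ)) := by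
              rw [Rat.num_div_den]
          _ = (q.num : ℚ) := by field_simp
      have : ((q.den : ℤ) * c) • (q • y) = q.num • (c • y) := by
        rw [mul_comm, mul_smul, hden, smul_comm]
      rw [this]
      exact N.smul_mem _ hcy

lemma spanq_inf (L1 L2 : Submodule ℤ E) :
    span ℚ ((L1 ⊓ L2 : Submodule ℤ E) : Set E) = span ℚ (L1 : Set E) ⊓ span ℚ (L2 : Set E) := by
  refine le_antisymm (le_inf (Submodule.span_mono fun x hx => hx.1)
    (Submodule.span_mono fun x hx => hx.2)) ?_
  rintro x ⟨hx1, hx2⟩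
  obtain ⟨c, hc, hcx⟩ := exists_int_smul_mem hx1
  obtain ⟨e, he, hex⟩ := exists_int_smul_mem hx2
  have hmem : (c * e) • x ∈ L1 ⊓ L2 := by
    constructor
    · rw [mul_comm, mul_smul]; exact L1.smul_mem e hcx
    · rw [mul_smul]; exact L2.smul_mem c hex
  have hne : ((c * e : ℤ) : ℚ) ≠ 0 := by exact_mod_cast mul_ne_zero hc he
  have hx : x = ((c * e : ℤ) : ℚ)⁻¹ • (((c * e : ℤ) : ℚ) • x) := (inv_smul_smul₀ hne x).symm
  rw [hx, Int.cast_smul_eq_zsmul ℚ]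
  exact Submodule.smul_mem _ _ (subset_span hmem)

lemma spanq_sup (L1 L2 : Submodule ℤ E) :
    span ℚ ((L1 ⊔ L2 : Submodule ℤ E) : Set E) = span ℚ (L1 : Set E) ⊔ span ℚ (L2 : Set E) := by
  have h1 : (L1 ⊔ L2 : Submodule ℤ E) = span ℤ ((L1 : Set E) ∪ (L2 : Set E)) := by
    rw [Submodule.span_union, Submodule.span_eq, Submodule.span_eq]
  rw [h1, Submodule.span_span_of_tower, Submodule.span_union]

lemma rank_identity (L1 L2 : Submodule ℤ E) {d1 d2 di ds : ℕ}
    (h1 : IsLatticeOfRank L1 d1) (h2 : IsLatticeOfRank L2 d2)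
    (hi : IsLatticeOfRank (L1 ⊓ L2) di) (hs : IsLatticeOfRank (L1 ⊔ L2) ds) :
    d1 + d2 = di + ds := by
  set Q1 := span ℚ (L1 : Set E) with hQ1
  set Q2 := span ℚ (L2 : Set E) with hQ2
  haveI : FiniteDimensional ℚ Q1 := by
    obtain ⟨b, hb, hNb⟩ := h1
    rw [hQ1, hNb, Submodule.span_span_of_tower]
    exact FiniteDimensional.span_of_finite ℚ (Set.finite_range b)
  haveI : FiniteDimensional ℚ Q2 := by
    obtain ⟨b, hb, hNb⟩ := h2
    rw [hQ2, hNb, Submodule.span_span_of_tower]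
    exact FiniteDimensional.span_of_finite ℚ (Set.finite_range b)
  have key := Submodule.finrank_sup_add_finrank_inf_eq Q1 Q2
  rw [← spanq_sup, ← spanq_inf] at key
  rw [finrank_spanq h1, finrank_spanq h2, finrank_spanq hi, finrank_spanq hs] at key
  omega

end rankq

end UCaux

open Submodule Set in
/-- Rank and determinant (un)crossing for two primitive sublattices. -/
theorem rank_det_uncrossing {n : ℕ} (L L1 L2 : Submodule ℤ (EuclideanSpace ℝ (Fin n)))
    (hL : IsLatticeOfRank L n) (h1 : L1 ≤ L) (h2 : L2 ≤ L)
    (hprim1 : (L1 : Set (EuclideanSpace ℝ (Fin n))) =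
      (L : Set (EuclideanSpace ℝ (Fin n))) ∩
        (Submodule.span ℝ (L1 : Set (EuclideanSpace ℝ (Fin n))) :
          Set (EuclideanSpace ℝ (Fin n))))
    (hprim2 : (L2 : Set (EuclideanSpace ℝ (Fin n))) =
      (L : Set (EuclideanSpace ℝ (Fin n))) ∩
        (Submodule.span ℝ (L2 : Set (EuclideanSpace ℝ (Fin n))) :
          Set (EuclideanSpace ℝ (Fin n))))
    (d1 d2 di ds : ℕ)
    (hd1 : IsLatticeOfRank L1 d1) (hd2 : IsLatticeOfRank L2 d2)
    (hdi : IsLatticeOfRank (L1 ⊓ L2) di) (hds : IsLatticeOfRank (L1 ⊔ L2) ds)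
    (v1 v2 vi vs : ℝ)
    (hv1 : latHasDet (L1 : Set (EuclideanSpace ℝ (Fin n))) v1)
    (hv2 : latHasDet (L2 : Set (EuclideanSpace ℝ (Fin n))) v2)
    (hvi : latHasDet ((L1 ⊓ L2 : Submodule ℤ (EuclideanSpace ℝ (Fin n))) :
      Set (EuclideanSpace ℝ (Fin n))) vi)
    (hvs : latHasDet ((L1 ⊔ L2 : Submodule ℤ (EuclideanSpace ℝ (Fin n))) :
      Set (EuclideanSpace ℝ (Fin n))) vs) :
    d1 + d2 = di + ds ∧ vi * vs ≤ v1 * v2 := by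
  classical
  set E' := EuclideanSpace ℝ (Fin n)
  -- primitivity in membership form
  have hp2 : ∀ x ∈ L, x ∈ Submodule.span ℝ (L2 : Set E') → x ∈ L2 := by
    intro x hx hsp
    have : x ∈ (L : Set E') ∩ (Submodule.span ℝ (L2 : Set E') : Set E') := ⟨hx, hsp⟩
    rw [← hprim2] at this
    exact this
  -- rank identity
  have hrank : d1 + d2 = di + ds := UCaux.rank_identity L1 L2 hd1 hd2 hdi hds
  refine ⟨hrank, ?_⟩
  -- adapted bases
  have hprimI : ∀ x ∈ L1, x ∈ Submodule.span ℝ ((L1 ⊓ L2 : Submodule ℤ E') : Set E') →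
      x ∈ L1 ⊓ L2 := by
    intro x hx hsp
    refine ⟨hx, hp2 x (h1 hx) ?_⟩
    exact Submodule.span_mono (fun y (hy : y ∈ (L1 ⊓ L2 : Submodule ℤ E')) => hy.2) hsp
  obtain ⟨k1, l1, m, u, hliMU, hspanL1, hspanI⟩ := UCaux.exists_adapted hd1 inf_le_left hprimI
  have hprimS : ∀ x ∈ L1 ⊔ L2, x ∈ Submodule.span ℝ (L2 : Set E') → x ∈ L2 :=
    fun x hx hsp => hp2 x (sup_le h1 h2 hx) hsp
  obtain ⟨k2, l2, m', u', hliMU', hspanLS, hspanL2⟩ :=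
    UCaux.exists_adapted hds le_sup_right hprimS
  have hlim : LinearIndependent ℝ m := by
    have := hliMU.comp Sum.inl Sum.inl_injective
    exact this
  have hlim' : LinearIndependent ℝ m' := by
    have := hliMU'.comp Sum.inl Sum.inl_injective
    exact this
  -- rank bookkeeping
  have hdi' : di = k1 := by simpa using UCaux.rank_unique hdi hlim hspanI
  have hd1' : d1 = k1 + l1 := by simpa using UCaux.rank_unique hd1 hliMU hspanL1
  have hd2' : d2 = k2 := by simpa using UCaux.rank_unique hd2 hlim' hspanL2
  have hds' : ds = k2 + l2 := by simpa using UCaux.rank_unique hds hliMU' hspanLS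
  -- determinants
  have hvi' : vi = Real.sqrt (UCaux.gram m).det := UCaux.det_unique hvi hlim hspanI
  have hv1' : v1 = Real.sqrt (UCaux.gram (Sum.elim m u)).det :=
    UCaux.det_unique hv1 hliMU hspanL1
  have hv2' : v2 = Real.sqrt (UCaux.gram m').det := UCaux.det_unique hv2 hlim' hspanL2
  have hvs' : vs = Real.sqrt (UCaux.gram (Sum.elim m' u')).det :=
    UCaux.det_unique hvs hliMU' hspanLS
  -- factorizations
  obtain ⟨hliu, hfac1⟩ := UCaux.gram_factor hliMU
  obtain ⟨hliu', hfac2⟩ := UCaux.gram_factor hliMU'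
  set W : Submodule ℝ E' := Submodule.span ℝ (Set.range m) with hWdef
  set V2 : Submodule ℝ E' := Submodule.span ℝ (Set.range m') with hV2def
  -- m i lies in V2
  have hmV2 : ∀ i, m i ∈ V2 := by
    intro i
    have h1' : m i ∈ L1 ⊓ L2 := by
      rw [hspanI]; exact Submodule.subset_span (Set.mem_range_self i)
    have h2' : m i ∈ L2 := h1'.2
    rw [hspanL2] at h2'
    exact Submodule.span_subset_span ℤ ℝ _ h2'
  have hm'V2 : ∀ i, m' i ∈ V2 := fun i => Submodule.subset_span (Set.mem_range_self i)
  -- the ℤ-linear projection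
  set prZ : E' →ₗ[ℤ] E' := (UCaux.pr V2).restrictScalars ℤ with hprZdef
  have hπ2 : ∀ x, prZ x = UCaux.pr V2 x := fun x => rfl
  have hmap : ∀ {κ : Type} (f : κ → E'),
      Submodule.map prZ (Submodule.span ℤ (Set.range f)) =
        Submodule.span ℤ (Set.range fun j => UCaux.pr V2 (f j)) := by
    intro κ f
    rw [Submodule.map_span]
    congr 1
    rw [← Set.range_comp]
    rfl
  have hzero : ∀ {κ : Type} (f : κ → E'), (∀ i, f i ∈ V2) →
      Submodule.span ℤ (Set.range fun j => UCaux.pr V2 (f j)) = ⊥ := by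
    intro κ f hf
    rw [eq_bot_iff, Submodule.span_le]
    rintro x ⟨i, rfl⟩
    simp [UCaux.pr_eq_zero_of_mem (hf i)]
  have hsplit : ∀ {κ₁ κ₂ : Type} (f : κ₁ → E') (g : κ₂ → E'),
      Submodule.span ℤ (Set.range (Sum.elim f g)) =
        Submodule.span ℤ (Set.range f) ⊔ Submodule.span ℤ (Set.range g) := by
    intro κ₁ κ₂ f g
    rw [Sum.elim_range, Submodule.span_union]
  have hπcomp : ∀ {κ₁ κ₂ : Type} (f : κ₁ → E') (g : κ₂ → E'),
      (fun x => UCaux.pr V2 (Sum.elim f g x)) =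
        Sum.elim (fun i => UCaux.pr V2 (f i)) (fun j => UCaux.pr V2 (g j)) := by
    intro κ₁ κ₂ f g
    funext x
    cases x <;> rfl
  -- span equality for projected families
  have hspanEq : Submodule.span ℤ (Set.range fun j => UCaux.pr V2 (u j)) =
      Submodule.span ℤ (Set.range fun j => UCaux.pr V2 (u' j)) := by
    have e1 : Submodule.map prZ L1 = Submodule.span ℤ (Set.range fun j => UCaux.pr V2 (u j)) := by
      rw [hspanL1, hmap, hπcomp, hsplit, hzero m hmV2, bot_sup_eq]
    have e2 : Submodule.map prZ L2 = ⊥ := by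
      rw [hspanL2, hmap, hzero m' hm'V2]
    have e3 : Submodule.map prZ (L1 ⊔ L2) =
        Submodule.span ℤ (Set.range fun j => UCaux.pr V2 (u' j)) := by
      rw [hspanLS, hmap, hπcomp, hsplit, hzero m' hm'V2, bot_sup_eq]
    rw [← e1, ← e3, Submodule.map_sup, e2, sup_bot_eq]
  have hcardu : Fintype.card (Fin l1) = Fintype.card (Fin l2) := by simp; omega
  obtain ⟨hliu2, hdeteq⟩ :=
    UCaux.transfer (f := fun j => UCaux.pr V2 (u j)) (g := fun j => UCaux.pr V2 (u' j))
      hliu' hcardu hspanEq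
  -- monotonicity under nested projections
  have hWle : W ≤ V2 := by
    rw [hWdef, Submodule.span_le]
    rintro x ⟨i, rfl⟩
    exact hmV2 i
  have hproj2 : ∀ x, UCaux.pr V2 (UCaux.pr W x) = UCaux.pr V2 x := by
    intro x
    have hz : UCaux.pr V2 (x - UCaux.pr W x) = 0 :=
      UCaux.pr_eq_zero_of_mem (hWle (UCaux.sub_pr_mem W x))
    have h2' : UCaux.pr V2 x - UCaux.pr V2 (UCaux.pr W x) = 0 := by
      rw [← map_sub]; exact hz
    have := sub_eq_zero.mp h2'
    exact this.symm
  have hmono : (UCaux.gram fun j => UCaux.pr V2 (u j)).det ≤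
      (UCaux.gram fun j => UCaux.pr W (u j)).det := by
    have hrw : (fun j => UCaux.pr V2 (u j)) = fun j => UCaux.pr V2 (UCaux.pr W (u j)) :=
      funext fun j => (hproj2 (u j)).symm
    rw [hrw]
    exact UCaux.gram_pr_det_le V2 (fun j => UCaux.pr W (u j))
  -- assemble
  have hnn0 : 0 ≤ (UCaux.gram m).det := UCaux.gram_det_nonneg m
  have hnn2 : 0 ≤ (UCaux.gram m').det := UCaux.gram_det_nonneg m'
  have hv1'' : v1 = vi * Real.sqrt (UCaux.gram fun j => UCaux.pr W (u j)).det := by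
    rw [hv1', hfac1, Real.sqrt_mul hnn0, ← hvi']
  have hvs'' : vs = v2 * Real.sqrt (UCaux.gram fun j => UCaux.pr V2 (u' j)).det := by
    rw [hvs', hfac2, Real.sqrt_mul hnn2, ← hv2']
  have hvi0 : 0 ≤ vi := hvi' ▸ Real.sqrt_nonneg _
  have hv20 : 0 ≤ v2 := hv2' ▸ Real.sqrt_nonneg _
  calc vi * vs = vi * v2 * Real.sqrt (UCaux.gram fun j => UCaux.pr V2 (u' j)).det := by
        rw [hvs'']; ring
    _ = vi * v2 * Real.sqrt (UCaux.gram fun j => UCaux.pr V2 (u j)).det := by rw [hdeteq]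
    _ ≤ vi * v2 * Real.sqrt (UCaux.gram fun j => UCaux.pr W (u j)).det := by
        refine mul_le_mul_of_nonneg_left (Real.sqrt_le_sqrt hmono) ?_
        positivity
    _ = v1 * v2 := by rw [hv1'']; ring
end
end

section
/- The direct sum of two stable lattices is stable: if M1 in R^n and M2 in R^m are stable lattices, then M1 ⊕ M2 = {(x,y) : x in M1, y in M2} is a stable lattice in R^(n+m). -/
open scoped Real Pointwise
open MeasureTheory Set

noncomputable section

variable {E : Type*} [NormedAddCommGroup E] [InnerProductSpace ℝ E]

section Aux

open Submodule Matrix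

/-! ### Gram matrices -/

/-- The Gram matrix of a family of vectors. -/
def gramM {ι : Type*} [Fintype ι] (b : ι → E) : Matrix ι ι ℝ :=
  Matrix.of fun i j => (inner ℝ (b i) (b j) : ℝ)

lemma gramM_apply {ι : Type*} [Fintype ι] (b : ι → E) (i j : ι) :
    gramM b i j = (inner ℝ (b i) (b j) : ℝ) := rfl

lemma dot_gramM {ι : Type*} [Fintype ι] (b : ι → E) (x : ι → ℝ) :
    x ⬝ᵥ gramM b *ᵥ x = ‖∑ i, x i • b i‖ ^ 2 := by
  rw [← real_inner_self_eq_norm_sq, sum_inner]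
  simp only [dotProduct, Matrix.mulVec, gramM, Matrix.of_apply, dotProduct,
    inner_sum, real_inner_smul_left, real_inner_smul_right, Finset.mul_sum]
  refine Finset.sum_congr rfl fun i _ => Finset.sum_congr rfl fun j _ => by ring

lemma gramM_posSemidef {ι : Type*} [Fintype ι] (b : ι → E) : (gramM b).PosSemidef := by
  refine Matrix.PosSemidef.of_dotProduct_mulVec_nonneg ?_ ?_
  · show (gramM b)ᴴ = gramM b
    ext i j
    simp [gramM, Matrix.conjTranspose_apply, real_inner_comm]
  · intro x
    have hs : star x = x := by funext i; simp
    rw [hs, dot_gramM]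
    positivity

lemma gramM_transform {ι κ : Type*} [Fintype ι] [Fintype κ] (T : Matrix κ ι ℝ) (b : ι → E) :
    gramM (fun k => ∑ i, T k i • b i) = T * gramM b * Tᵀ := by
  ext k l
  simp only [gramM, Matrix.of_apply, Matrix.mul_apply, Matrix.transpose_apply,
    inner_sum, sum_inner, real_inner_smul_left, real_inner_smul_right, Finset.mul_sum,
    Finset.sum_mul]
  refine Finset.sum_congr rfl fun i _ => Finset.sum_congr rfl fun j _ => by
    rw [real_inner_comm]; ring

lemma det_gramM_comp_equiv {ι κ : Type*} [Fintype ι] [Fintype κ] [DecidableEq ι] [DecidableEq κ]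
    (e : ι ≃ κ) (v : κ → E) : (gramM (v ∘ e)).det = (gramM v).det := by
  have : gramM (v ∘ e) = (gramM v).submatrix e e := rfl
  rw [this, Matrix.det_submatrix_equiv_self]

lemma det_gramM_sum_elim {ι κ : Type*} [Fintype ι] [Fintype κ] [DecidableEq ι] [DecidableEq κ]
    (u : ι → E) (w : κ → E) (h : ∀ i j, (inner ℝ (u i) (w j) : ℝ) = 0) :
    (gramM (Sum.elim u w)).det = (gramM u).det * (gramM w).det := by
  have hblock : gramM (Sum.elim u w) =
      Matrix.fromBlocks (gramM u) 0 0 (gramM w) := by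
    ext (i | i) (j | j) <;>
      simp only [gramM, Matrix.of_apply, Sum.elim_inl, Sum.elim_inr,
        Matrix.fromBlocks_apply₁₁, Matrix.fromBlocks_apply₁₂, Matrix.fromBlocks_apply₂₁,
        Matrix.fromBlocks_apply₂₂, Matrix.zero_apply]
    · exact h i j
    · rw [real_inner_comm]; exact h j i
  rw [hblock, Matrix.det_fromBlocks_zero₁₂]

/-! ### Positive semidefinite determinant facts -/

lemma posSemidef_det_nonneg {ι : Type*} [Fintype ι] [DecidableEq ι] {M : Matrix ι ι ℝ}
    (hM : M.PosSemidef) : 0 ≤ M.det := by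
  rw [hM.1.det_eq_prod_eigenvalues]
  exact Finset.prod_nonneg fun i _ => hM.eigenvalues_nonneg i

lemma one_le_det_one_add {ι : Type*} [Fintype ι] [DecidableEq ι] {M : Matrix ι ι ℝ}
    (hM : M.PosSemidef) : 1 ≤ (1 + M).det := by
  have hH := hM.1
  set U : Matrix ι ι ℝ := (hH.eigenvectorUnitary : Matrix ι ι ℝ) with hUdef
  have hU : U * star U = 1 := Matrix.mem_unitaryGroup_iff.mp hH.eigenvectorUnitary.2
  have hspec : M = U * Matrix.diagonal (RCLike.ofReal ∘ hH.eigenvalues) * star U :=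
    hH.spectral_theorem
  have hdiag : Matrix.diagonal (RCLike.ofReal ∘ hH.eigenvalues) =
      Matrix.diagonal hH.eigenvalues := by
    rw [RCLike.ofReal_real_eq_id]; rfl
  have h1M : (1 : Matrix ι ι ℝ) + M =
      U * Matrix.diagonal (fun i => 1 + hH.eigenvalues i) * star U := by
    have : Matrix.diagonal (fun i => 1 + hH.eigenvalues i) =
        (1 : Matrix ι ι ℝ) + Matrix.diagonal hH.eigenvalues := by
      rw [← Matrix.diagonal_one, Matrix.diagonal_add]
    rw [this, Matrix.mul_add, Matrix.add_mul, Matrix.mul_one, hU]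
    congr 1

  have hdet : ((1 : Matrix ι ι ℝ) + M).det = ∏ i, (1 + hH.eigenvalues i) := by
    rw [h1M, Matrix.det_mul, Matrix.det_mul, Matrix.det_diagonal]
    have : U.det * (star U).det = 1 := by rw [← Matrix.det_mul, hU, Matrix.det_one]
    calc U.det * (∏ i, (1 + hH.eigenvalues i)) * (star U).det
        = (U.det * (star U).det) * ∏ i, (1 + hH.eigenvalues i) := by ring
      _ = ∏ i, (1 + hH.eigenvalues i) := by rw [this, one_mul]
  rw [hdet]
  calc (1 : ℝ) = ∏ _i : ι, 1 := by simp
    _ ≤ ∏ i, (1 + hH.eigenvalues i) :=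
        Finset.prod_le_prod (fun _ _ => zero_le_one)
          (fun i _ => le_add_of_nonneg_right (hM.eigenvalues_nonneg i))

open scoped MatrixOrder in
lemma det_le_det_add {ι : Type*} [Fintype ι] [DecidableEq ι] {A B : Matrix ι ι ℝ}
    (hA : A.PosSemidef) (hB : B.PosSemidef) : B.det ≤ (A + B).det := by
  by_cases hdB : B.det = 0
  · rw [hdB]; exact posSemidef_det_nonneg (hA.add hB)
  · set S := CFC.sqrt B with hSdef
    have hS2 : S * S = B := CFC.sqrt_mul_sqrt_self B hB.nonneg
    have hSH : S.IsHermitian := (CFC.sqrt_nonneg B).posSemidef.1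
    have hdS : IsUnit S.det := by
      refine isUnit_iff_ne_zero.mpr fun h => hdB ?_
      rw [← hS2, Matrix.det_mul, h, mul_zero]
    have hSi : S * S⁻¹ = 1 := Matrix.mul_nonsing_inv S hdS
    have hiS : S⁻¹ * S = 1 := Matrix.nonsing_inv_mul S hdS
    set M := S⁻¹ * A * S⁻¹ with hMdef
    have hMpsd : M.PosSemidef := by
      have h1 : (S⁻¹)ᴴ = S⁻¹ := by rw [Matrix.conjTranspose_nonsing_inv, hSH.eq]
      have := hA.mul_mul_conjTranspose_same S⁻¹
      rw [h1] at this
      rw [hMdef]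
      exact this
    have hkey : A + B = S * (1 + M) * S := by
      rw [Matrix.mul_add, Matrix.add_mul, Matrix.mul_one, hS2, hMdef]
      have : S * (S⁻¹ * A * S⁻¹) * S = (S * S⁻¹) * A * (S⁻¹ * S) := by
        simp only [Matrix.mul_assoc]
      rw [this, hSi, hiS, Matrix.one_mul, Matrix.mul_one, add_comm]
    have hdetB : 0 ≤ B.det := posSemidef_det_nonneg hB
    calc B.det = B.det * 1 := (mul_one _).symm
      _ ≤ B.det * (1 + M).det := by
          exact mul_le_mul_of_nonneg_left (one_le_det_one_add hMpsd) hdetB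
      _ = (A + B).det := by
          rw [hkey, Matrix.det_mul, Matrix.det_mul, ← hS2, Matrix.det_mul]; ring

/-! ### Linear independence over `ℤ` versus `ℝ` -/

lemma li_int_of_li_real {ι : Type*} {b : ι → E} (hb : LinearIndependent ℝ b) :
    LinearIndependent ℤ b :=
  hb.restrict_scalars (by intro x y h; simpa using h)

lemma li_real_of_li_int {r d : ℕ} {b : Fin d → E} (hb : LinearIndependent ℝ b)
    {u : Fin r → E} (hu : LinearIndependent ℤ u)
    (hmem : ∀ i, u i ∈ span ℤ (Set.range b)) : LinearIndependent ℝ u := by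
  classical
  have hcoord : ∀ i, ∃ f : Fin d → ℤ, (∑ j, f j • b j) = u i := fun i =>
    (mem_span_range_iff_exists_fun ℤ).mp (hmem i)
  choose C hC using hcoord
  set Cm : Matrix (Fin r) (Fin d) ℤ := Matrix.of C with hCm
  set D : Matrix (Fin r) (Fin r) ℤ := Cm * Cmᵀ with hD
  -- the integer Gram matrix has nonzero determinant
  have hdD : D.det ≠ 0 := by
    intro h0
    obtain ⟨x, hx0, hx⟩ := Matrix.exists_mulVec_eq_zero_iff.mpr h0
    have hxx : x ⬝ᵥ D *ᵥ x = 0 := by rw [hx, dotProduct_zero]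
    have hvm : ∀ j, (Matrix.vecMul x Cm) j = 0 := by
      have h1 : x ⬝ᵥ D *ᵥ x = (Matrix.vecMul x Cm) ⬝ᵥ (Matrix.vecMul x Cm) := by
        rw [hD, ← Matrix.mulVec_mulVec, Matrix.dotProduct_mulVec, Matrix.mulVec_transpose]
      rw [h1] at hxx
      intro j
      have hnn : ∀ j ∈ Finset.univ, 0 ≤ (Matrix.vecMul x Cm) j * (Matrix.vecMul x Cm) j :=
        fun j _ => mul_self_nonneg _
      have := (Finset.sum_eq_zero_iff_of_nonneg hnn).mp hxx j (Finset.mem_univ j)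
      exact mul_self_eq_zero.mp this
    -- so `x` gives an integer relation among the `u i`
    have hrel : (∑ i, x i • u i) = 0 := by
      have heq : (∑ i, x i • u i) = ∑ j, (Matrix.vecMul x Cm) j • b j := by
        calc ∑ i, x i • u i = ∑ i, ∑ j, (x i * C i j) • b j := by
              refine Finset.sum_congr rfl fun i _ => ?_
              rw [← hC i, Finset.smul_sum]
              exact Finset.sum_congr rfl fun j _ => smul_smul (x i) (C i j) (b j)
          _ = ∑ j, (∑ i, x i * C i j) • b j := by
              rw [Finset.sum_comm]
              exact Finset.sum_congr rfl fun j _ => (Finset.sum_smul).symm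
          _ = ∑ j, (Matrix.vecMul x Cm) j • b j := by
              refine Finset.sum_congr rfl fun j _ => ?_
              congr 1
      rw [heq]
      refine Finset.sum_eq_zero fun j _ => by rw [hvm j, zero_smul]
    have := Fintype.linearIndependent_iff.mp hu x hrel
    exact hx0 (funext this)
  -- now conclude linear independence over ℝ
  rw [Fintype.linearIndependent_iff]
  intro g hg
  set C' : Matrix (Fin r) (Fin d) ℝ := Cm.map (Int.cast) with hC'
  have hgC : ∀ j, (Matrix.vecMul g C') j = 0 := by
    have hrel : (∑ j, (Matrix.vecMul g C') j • b j) = 0 := by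
      have heq : (∑ j, (Matrix.vecMul g C') j • b j) = ∑ i, g i • u i := by
        calc ∑ j, (Matrix.vecMul g C') j • b j
            = ∑ j, (∑ i, g i * ((C i j : ℝ))) • b j := by
              refine Finset.sum_congr rfl fun j _ => ?_
              congr 1
          _ = ∑ i, ∑ j, (g i * ((C i j : ℝ))) • b j := by
              rw [Finset.sum_comm]
              exact Finset.sum_congr rfl fun j _ => Finset.sum_smul
          _ = ∑ i, g i • u i := by
              refine Finset.sum_congr rfl fun i _ => ?_
              rw [← hC i, Finset.smul_sum]
              refine Finset.sum_congr rfl fun j _ => ?_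
              rw [← smul_smul, Int.cast_smul_eq_zsmul]
      rw [heq, hg]
    exact fun j => Fintype.linearIndependent_iff.mp hb _ hrel j
  have hdD' : IsUnit (C' * C'ᵀ).det := by
    have hcast : C' * C'ᵀ = (Int.castRingHom ℝ).mapMatrix D := by
      rw [hD, hC']
      ext i j
      simp [Matrix.mul_apply, RingHom.mapMatrix_apply]
    rw [hcast, ← RingHom.map_det]
    refine isUnit_iff_ne_zero.mpr ?_
    simpa using hdD
  intro i
  have h1 : Matrix.vecMul g (C' * C'ᵀ) = 0 := by
    rw [← Matrix.vecMul_vecMul]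
    funext j
    rw [show Matrix.vecMul g C' = 0 from funext hgC]
    simp
  have h2 : g = 0 := by
    have := congrArg (fun v => Matrix.vecMul v (C' * C'ᵀ)⁻¹) h1
    simpa [Matrix.vecMul_vecMul, Matrix.mul_nonsing_inv _ hdD'] using this
  rw [h2]; rfl

lemma span_real_eq_of_span_int_eq {s t : Set E}
    (h : span ℤ s = span ℤ t) : span ℝ s = span ℝ t := by
  rw [← span_span_of_tower (R := ℤ) (S := ℝ) , h, span_span_of_tower]

lemma card_eq_of_span_int_eq {d e : ℕ} {b : Fin d → E} {c : Fin e → E}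
    (hb : LinearIndependent ℝ b) (hc : LinearIndependent ℝ c)
    (h : span ℤ (Set.range b) = span ℤ (Set.range c)) : d = e := by
  have hr : span ℝ (Set.range b) = span ℝ (Set.range c) :=
    span_real_eq_of_span_int_eq h
  have h1 := finrank_span_eq_card hb
  have h2 := finrank_span_eq_card hc
  rw [hr] at h1
  rw [h1] at h2
  simpa using h2

lemma det_gramM_eq_of_span_int_eq {d e : ℕ} {b : Fin d → E} {c : Fin e → E}
    (hb : LinearIndependent ℝ b) (hc : LinearIndependent ℝ c)
    (h : span ℤ (Set.range b) = span ℤ (Set.range c)) :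
    (gramM b).det = (gramM c).det := by
  classical
  obtain rfl : d = e := card_eq_of_span_int_eq hb hc h
  have hbz : LinearIndependent ℤ b := li_int_of_li_real hb
  have hcb : ∀ i, ∃ f : Fin d → ℤ, (∑ j, f j • b j) = c i := fun i =>
    (mem_span_range_iff_exists_fun ℤ).mp
      (h ▸ Submodule.subset_span (Set.mem_range_self i))
  have hbc : ∀ i, ∃ f : Fin d → ℤ, (∑ j, f j • c j) = b i := fun i =>
    (mem_span_range_iff_exists_fun ℤ).mp
      (h.symm ▸ Submodule.subset_span (Set.mem_range_self i))
  choose C hC using hcb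
  choose B hB using hbc
  have hBC : (Matrix.of B) * (Matrix.of C) = 1 := by
    ext i k
    have e1 : (∑ k, ((Matrix.of B) * (Matrix.of C)) i k • b k) = b i := by
      calc ∑ k, ((Matrix.of B) * (Matrix.of C)) i k • b k
          = ∑ k, ∑ j, (B i j * C j k) • b k := by
            refine Finset.sum_congr rfl fun k _ => ?_
            rw [show ((Matrix.of B) * (Matrix.of C)) i k = ∑ j, B i j * C j k from
              Matrix.mul_apply]
            exact Finset.sum_smul
        _ = ∑ j, B i j • (∑ k, C j k • b k) := by
            rw [Finset.sum_comm]
            refine Finset.sum_congr rfl fun j _ => ?_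
            rw [Finset.smul_sum]
            exact Finset.sum_congr rfl fun k _ => (smul_smul _ _ _).symm
        _ = ∑ j, B i j • c j := by
            exact Finset.sum_congr rfl fun j _ => by rw [hC j]
        _ = b i := hB i
    have e2 : (∑ k, (1 : Matrix (Fin d) (Fin d) ℤ) i k • b k) = b i := by
      simp [Matrix.one_apply, ite_smul]
    have hrel : (∑ k, (((Matrix.of B) * (Matrix.of C)) i k -
        (1 : Matrix (Fin d) (Fin d) ℤ) i k) • b k) = 0 := by
      simp only [sub_smul, Finset.sum_sub_distrib, e1, e2, sub_self]
    have := Fintype.linearIndependent_iff.mp hbz _ hrel k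
    exact sub_eq_zero.mp this
  have hunit : IsUnit (Matrix.of C).det := by
    refine IsUnit.of_mul_eq_one (Matrix.of B).det ?_
    rw [mul_comm, ← Matrix.det_mul, hBC, Matrix.det_one]
  set C' : Matrix (Fin d) (Fin d) ℝ := (Matrix.of C).map Int.cast with hC'
  have hdetC' : C'.det = (((Matrix.of C).det : ℤ) : ℝ) := by
    have : C' = (Int.castRingHom ℝ).mapMatrix (Matrix.of C) := by
      ext i j; simp [hC', RingHom.mapMatrix_apply]
    rw [this, ← RingHom.map_det]
    simp
  have hgc : gramM c = C' * gramM b * C'ᵀ := by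
    have hfun : c = fun k => ∑ j, C' k j • b j := by
      funext i
      rw [← hC i]
      refine Finset.sum_congr rfl fun j _ => ?_
      rw [show C' i j = ((C i j : ℤ) : ℝ) from rfl, Int.cast_smul_eq_zsmul]
    rw [hfun, gramM_transform]
  have hsq : C'.det * C'.det = 1 := by
    rcases Int.isUnit_iff.mp hunit with h1 | h1 <;> rw [hdetC', h1] <;> norm_num
  rw [hgc, Matrix.det_mul, Matrix.det_mul, Matrix.det_transpose]
  calc (gramM b).det = (C'.det * C'.det) * (gramM b).det := by rw [hsq, one_mul]
    _ = C'.det * (gramM b).det * C'.det := by ring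

/-- Any `ℤ`-submodule of a lattice admits a finite `ℤ`-basis. -/
lemma exists_basis_family {k : ℕ} {b : Fin k → E} (hb : LinearIndependent ℝ b)
    (N : Submodule ℤ E) (hN : N ≤ span ℤ (Set.range b)) :
    ∃ (r : ℕ) (c : Fin r → E), LinearIndependent ℤ c ∧ span ℤ (Set.range c) = N ∧
      ∀ i, c i ∈ N := by
  classical
  have hbz : LinearIndependent ℤ b := li_int_of_li_real hb
  set L : Submodule ℤ E := span ℤ (Set.range b) with hL
  let β : Module.Basis (Fin k) ℤ L := Module.Basis.span hbz
  set N' : Submodule ℤ L := N.comap L.subtype with hN'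
  obtain ⟨r, β'⟩ := Submodule.basisOfPid β N'
  refine ⟨r, fun i => ((β' i : L) : E), ?_, ?_, fun i => ?_⟩
  · have h1 : LinearIndependent ℤ (fun i => (β' i : L)) :=
      β'.linearIndependent.map' N'.subtype (Submodule.ker_subtype N')
    exact h1.map' L.subtype (Submodule.ker_subtype L)
  · have h2 : span ℤ (Set.range β') = (⊤ : Submodule ℤ N') := β'.span_eq
    have hcomp : (fun i => ((β' i : L) : E)) = (L.subtype.comp N'.subtype) ∘ β' := rfl
    calc span ℤ (Set.range fun i => ((β' i : L) : E))
        = span ℤ ((L.subtype.comp N'.subtype) '' Set.range β') := by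
          rw [hcomp, Set.range_comp]
      _ = Submodule.map (L.subtype.comp N'.subtype) (span ℤ (Set.range β')) :=
          (Submodule.map_span _ _).symm
      _ = Submodule.map (L.subtype.comp N'.subtype) ⊤ := by rw [h2]
      _ = LinearMap.range (L.subtype.comp N'.subtype) := Submodule.map_top _
      _ = Submodule.map L.subtype (LinearMap.range N'.subtype) := LinearMap.range_comp _ _
      _ = Submodule.map L.subtype N' := by rw [Submodule.range_subtype]
      _ = L ⊓ N := Submodule.map_comap_subtype L N
      _ = N := inf_eq_right.mpr hN
  · exact Submodule.mem_comap.mp (β' i).2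

end Aux

section Append

open Submodule Matrix

variable {n m : ℕ}

lemma appendE_castAdd (x : EuclideanSpace ℝ (Fin n)) (y : EuclideanSpace ℝ (Fin m)) (j : Fin n) :
    appendE x y (Fin.castAdd m j) = x j := by
  simp [appendE]

lemma appendE_natAdd (x : EuclideanSpace ℝ (Fin n)) (y : EuclideanSpace ℝ (Fin m)) (j : Fin m) :
    appendE x y (Fin.natAdd n j) = y j := by
  simp [appendE]

/-- Left projection, as a linear map. -/
def projLE : EuclideanSpace ℝ (Fin (n + m)) →ₗ[ℝ] EuclideanSpace ℝ (Fin n) where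
  toFun z := WithLp.toLp 2 (fun j => z (Fin.castAdd m j))
  map_add' _ _ := rfl
  map_smul' _ _ := rfl

/-- Right projection, as a linear map. -/
def projRE : EuclideanSpace ℝ (Fin (n + m)) →ₗ[ℝ] EuclideanSpace ℝ (Fin m) where
  toFun z := WithLp.toLp 2 (fun j => z (Fin.natAdd n j))
  map_add' _ _ := rfl
  map_smul' _ _ := rfl

lemma appendE_proj (z : EuclideanSpace ℝ (Fin (n + m))) :
    appendE (projLE z) (projRE z) = z := by
  ext i
  refine Fin.addCases (fun j => ?_) (fun j => ?_) i
  · rw [appendE_castAdd]; rfl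
  · rw [appendE_natAdd]; rfl

lemma projLE_appendE (x : EuclideanSpace ℝ (Fin n)) (y : EuclideanSpace ℝ (Fin m)) :
    projLE (appendE x y) = x := by
  ext j; exact appendE_castAdd x y j

lemma projRE_appendE (x : EuclideanSpace ℝ (Fin n)) (y : EuclideanSpace ℝ (Fin m)) :
    projRE (appendE x y) = y := by
  ext j; exact appendE_natAdd x y j

lemma appendE_add (x x' : EuclideanSpace ℝ (Fin n)) (y y' : EuclideanSpace ℝ (Fin m)) :
    appendE (x + x') (y + y') = appendE x y + appendE x' y' := by
  ext i
  have : (appendE x y + appendE x' y') i = appendE x y i + appendE x' y' i := rfl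
  rw [this]
  refine Fin.addCases (fun j => ?_) (fun j => ?_) i <;>
    simp [appendE_castAdd, appendE_natAdd] <;> rfl

lemma appendE_smul (r : ℝ) (x : EuclideanSpace ℝ (Fin n)) (y : EuclideanSpace ℝ (Fin m)) :
    appendE (r • x) (r • y) = r • appendE x y := by
  ext i
  have : (r • appendE x y) i = r • appendE x y i := rfl
  rw [this]
  refine Fin.addCases (fun j => ?_) (fun j => ?_) i <;>
    simp [appendE_castAdd, appendE_natAdd] <;> rfl

lemma appendE_zero : appendE (0 : EuclideanSpace ℝ (Fin n)) (0 : EuclideanSpace ℝ (Fin m)) = 0 := by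
  ext i
  refine Fin.addCases (fun j => ?_) (fun j => ?_) i <;>
    simp [appendE_castAdd, appendE_natAdd] <;> rfl

/-- Left inclusion, as a linear map. -/
def inclLE : EuclideanSpace ℝ (Fin n) →ₗ[ℝ] EuclideanSpace ℝ (Fin (n + m)) where
  toFun x := appendE x 0
  map_add' x x' := by rw [← appendE_add]; simp
  map_smul' r x := by rw [← appendE_smul]; simp

/-- Right inclusion, as a linear map. -/
def inclRE : EuclideanSpace ℝ (Fin m) →ₗ[ℝ] EuclideanSpace ℝ (Fin (n + m)) where
  toFun y := appendE 0 y
  map_add' y y' := by rw [← appendE_add]; simp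
  map_smul' r y := by rw [← appendE_smul]; simp

lemma inner_appendE (x x' : EuclideanSpace ℝ (Fin n)) (y y' : EuclideanSpace ℝ (Fin m)) :
    (inner ℝ (appendE x y) (appendE x' y') : ℝ) = inner ℝ x x' + inner ℝ y y' := by
  simp only [PiLp.inner_apply, RCLike.inner_apply, conj_trivial]
  rw [Fin.sum_univ_add]
  simp [appendE_castAdd, appendE_natAdd]

lemma inner_proj_decomp (z w : EuclideanSpace ℝ (Fin (n + m))) :
    (inner ℝ z w : ℝ) = inner ℝ (projLE z) (projLE w) + inner ℝ (projRE z) (projRE w) := by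
  conv_lhs => rw [← appendE_proj z, ← appendE_proj w]
  rw [inner_appendE]

lemma appendE_eq_add (x : EuclideanSpace ℝ (Fin n)) (y : EuclideanSpace ℝ (Fin m)) :
    appendE x y = inclLE x + inclRE y := by
  show appendE x y = appendE x 0 + appendE 0 y
  rw [← appendE_add]; simp

lemma projRE_inclLE (x : EuclideanSpace ℝ (Fin n)) : projRE (inclLE (m := m) x) = 0 :=
  projRE_appendE x 0

lemma projLE_inclLE (x : EuclideanSpace ℝ (Fin n)) : projLE (inclLE (m := m) x) = x :=
  projLE_appendE x 0

lemma projRE_inclRE (y : EuclideanSpace ℝ (Fin m)) : projRE (inclRE (n := n) y) = y :=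
  projRE_appendE 0 y

lemma projLE_inclRE (y : EuclideanSpace ℝ (Fin m)) : projLE (inclRE (n := n) y) = 0 :=
  projLE_appendE 0 y

end Append

/-- The direct sum of two stable lattices is stable. -/
theorem directSum_of_stable_isStable {n m : ℕ}
    (M1 : Submodule ℤ (EuclideanSpace ℝ (Fin n)))
    (M2 : Submodule ℤ (EuclideanSpace ℝ (Fin m)))
    (h1 : IsLatticeOfRank M1 n) (h2 : IsLatticeOfRank M2 m)
    (hs1 : IsStable (M1 : Set (EuclideanSpace ℝ (Fin n))))
    (hs2 : IsStable (M2 : Set (EuclideanSpace ℝ (Fin m)))) :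
    IsStable {z : EuclideanSpace ℝ (Fin (n + m)) |
      ∃ x ∈ M1, ∃ y ∈ M2, z = appendE x y} := by
  classical
  obtain ⟨⟨d1, b1, hb1li, hb1sp, hb1det⟩, hsub1⟩ := hs1
  obtain ⟨⟨d2, b2, hb2li, hb2sp, hb2det⟩, hsub2⟩ := hs2
  have hM1 : M1 = Submodule.span ℤ (Set.range b1) := SetLike.coe_injective hb1sp
  have hM2 : M2 = Submodule.span ℤ (Set.range b2) := SetLike.coe_injective hb2sp
  have hdet1 : (gramM b1).det = 1 := Real.sqrt_eq_one.mp hb1det.symm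
  have hdet2 : (gramM b2).det = 1 := Real.sqrt_eq_one.mp hb2det.symm
  set J1 : EuclideanSpace ℝ (Fin n) →ₗ[ℤ] EuclideanSpace ℝ (Fin (n + m)) :=
    (inclLE (n := n) (m := m)).restrictScalars ℤ with hJ1def
  set J2 : EuclideanSpace ℝ (Fin m) →ₗ[ℤ] EuclideanSpace ℝ (Fin (n + m)) :=
    (inclRE (n := n) (m := m)).restrictScalars ℤ with hJ2def
  set P1 : EuclideanSpace ℝ (Fin (n + m)) →ₗ[ℤ] EuclideanSpace ℝ (Fin n) :=
    (projLE (n := n) (m := m)).restrictScalars ℤ with hP1def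
  set P2 : EuclideanSpace ℝ (Fin (n + m)) →ₗ[ℤ] EuclideanSpace ℝ (Fin m) :=
    (projRE (n := n) (m := m)).restrictScalars ℤ with hP2def
  have hinclLE_inj : Function.Injective (inclLE (n := n) (m := m)) :=
    Function.LeftInverse.injective (g := projLE) projLE_inclLE
  have hinclRE_inj : Function.Injective (inclRE (n := n) (m := m)) :=
    Function.LeftInverse.injective (g := projRE) projRE_inclRE
  constructor
  · -- the direct sum has determinant 1
    set cc : Fin (d1 + d2) → EuclideanSpace ℝ (Fin (n + m)) :=
      (Sum.elim (fun i => inclLE (b1 i)) (fun j => inclRE (b2 j))) ∘ finSumFinEquiv.symm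
      with hccdef
    have hli1 : LinearIndependent ℝ (fun i => inclLE (m := m) (b1 i)) :=
      hb1li.map' inclLE (LinearMap.ker_eq_bot.mpr hinclLE_inj)
    have hli2 : LinearIndependent ℝ (fun j => inclRE (n := n) (b2 j)) :=
      hb2li.map' inclRE (LinearMap.ker_eq_bot.mpr hinclRE_inj)
    have hr1 : Set.range (fun i => inclLE (m := m) (b1 i)) = inclLE '' Set.range b1 :=
      Set.range_comp _ _
    have hr2 : Set.range (fun j => inclRE (n := n) (b2 j)) = inclRE '' Set.range b2 :=
      Set.range_comp _ _
    have hdisj : Disjoint (Submodule.span ℝ (Set.range fun i => inclLE (m := m) (b1 i)))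
        (Submodule.span ℝ (Set.range fun j => inclRE (n := n) (b2 j))) := by
      rw [Submodule.disjoint_def]
      intro x hx1 hx2
      have h1 : x ∈ LinearMap.range (inclLE (n := n) (m := m)) := by
        refine Submodule.span_le.mpr ?_ hx1
        rintro _ ⟨i, rfl⟩
        exact ⟨b1 i, rfl⟩
      have h2 : x ∈ LinearMap.range (inclRE (n := n) (m := m)) := by
        refine Submodule.span_le.mpr ?_ hx2
        rintro _ ⟨j, rfl⟩
        exact ⟨b2 j, rfl⟩
      obtain ⟨x1, rfl⟩ := h1
      obtain ⟨y2, hy⟩ := h2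
      have hzero : projRE (inclLE (m := m) x1) = 0 := projRE_inclLE x1
      have hy2 : y2 = 0 := by
        have := congrArg projRE hy
        rw [projRE_inclRE, hzero] at this
        exact this
      rw [← hy, hy2, map_zero]
    have hsumli : LinearIndependent ℝ
        (Sum.elim (fun i => inclLE (m := m) (b1 i)) (fun j => inclRE (n := n) (b2 j))) :=
      hli1.sum_type hli2 hdisj
    refine ⟨d1 + d2, cc, hsumli.comp _ finSumFinEquiv.symm.injective, ?_, ?_⟩
    · -- the point set equality
      have hrange : Set.range cc =
          Set.range (fun i => inclLE (m := m) (b1 i)) ∪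
          Set.range (fun j => inclRE (n := n) (b2 j)) := by
        rw [hccdef, finSumFinEquiv.symm.surjective.range_comp, Sum.elim_range]
      have hspan : Submodule.span ℤ (Set.range cc) =
          Submodule.map J1 M1 ⊔ Submodule.map J2 M2 := by
        rw [hrange, Submodule.span_union, hr1, hr2]
        have e1 : (inclLE (m := m)) '' Set.range b1 = ⇑J1 '' Set.range b1 := rfl
        have e2 : (inclRE (n := n)) '' Set.range b2 = ⇑J2 '' Set.range b2 := rfl
        rw [e1, e2, ← Submodule.map_span, ← Submodule.map_span, ← hM1, ← hM2]
      rw [hspan]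
      ext z
      simp only [Set.mem_setOf_eq, SetLike.mem_coe, Submodule.mem_sup, Submodule.mem_map]
      constructor
      · rintro ⟨x, hx, y, hy, rfl⟩
        exact ⟨J1 x, ⟨x, hx, rfl⟩, J2 y, ⟨y, hy, rfl⟩, (appendE_eq_add x y).symm⟩
      · rintro ⟨_, ⟨x, hx, rfl⟩, _, ⟨y, hy, rfl⟩, rfl⟩
        exact ⟨x, hx, y, hy, (appendE_eq_add x y).symm⟩
    · -- the determinant is 1
      have hcross : ∀ i j,
          (inner ℝ (inclLE (m := m) (b1 i)) (inclRE (n := n) (b2 j)) : ℝ) = 0 := by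
        intro i j
        show (inner ℝ (appendE (b1 i) 0) (appendE 0 (b2 j)) : ℝ) = 0
        rw [inner_appendE]
        simp
      have hub : gramM (fun i => inclLE (m := m) (b1 i)) = gramM b1 := by
        ext i j
        show (inner ℝ (appendE (b1 i) 0) (appendE (b1 j) 0) : ℝ) = inner ℝ (b1 i) (b1 j)
        rw [inner_appendE]
        simp
      have hvb : gramM (fun j => inclRE (n := n) (b2 j)) = gramM b2 := by
        ext i j
        show (inner ℝ (appendE 0 (b2 i)) (appendE 0 (b2 j)) : ℝ) = inner ℝ (b2 i) (b2 j)
        rw [inner_appendE]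
        simp
      have hdet : (gramM cc).det = 1 := by
        rw [hccdef, det_gramM_comp_equiv, det_gramM_sum_elim _ _ hcross, hub, hvb,
          hdet1, hdet2, one_mul]
      show (1 : ℝ) = Real.sqrt (gramM cc).det
      rw [hdet, Real.sqrt_one]
  · -- sublattices have determinant at least 1
    rintro L hLA v ⟨d, b, hbli, hbsp, hv⟩
    have hL : L = Submodule.span ℤ (Set.range b) := SetLike.coe_injective hbsp
    have hmem : ∀ z ∈ L, projLE z ∈ M1 ∧ projRE z ∈ M2 := by
      intro z hz
      obtain ⟨x, hx, y, hy, rfl⟩ := hLA hz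
      rw [projLE_appendE, projRE_appendE]
      exact ⟨hx, hy⟩
    -- the projected lattice N2 and the kernel lattice N1
    set N2 : Submodule ℤ (EuclideanSpace ℝ (Fin m)) := Submodule.map P2 L with hN2def
    have hN2M2 : N2 ≤ M2 := by
      rintro _ ⟨z, hz, rfl⟩
      exact (hmem z hz).2
    have hN2le : N2 ≤ Submodule.span ℤ (Set.range b2) := by rw [← hM2]; exact hN2M2
    obtain ⟨r2, c2, hc2z, hc2sp, hc2mem⟩ := exists_basis_family hb2li N2 hN2le
    have hc2r : LinearIndependent ℝ c2 :=
      li_real_of_li_int hb2li hc2z (fun i => hN2le (hc2mem i))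
    have hdetc2 : 1 ≤ (gramM c2).det := by
      have h := hsub2 N2 (SetLike.coe_subset_coe.mpr hN2M2) (Real.sqrt (gramM c2).det)
        ⟨r2, c2, hc2r, by rw [hc2sp], rfl⟩
      exact Real.one_le_sqrt.mp h
    set K : Submodule ℤ (EuclideanSpace ℝ (Fin (n + m))) := L ⊓ LinearMap.ker P2 with hKdef
    set N1 : Submodule ℤ (EuclideanSpace ℝ (Fin n)) := Submodule.map P1 K with hN1def
    have hN1M1 : N1 ≤ M1 := by
      rintro _ ⟨z, hz, rfl⟩
      exact (hmem z hz.1).1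
    have hN1le : N1 ≤ Submodule.span ℤ (Set.range b1) := by rw [← hM1]; exact hN1M1
    obtain ⟨r1, c1, hc1z, hc1sp, hc1mem⟩ := exists_basis_family hb1li N1 hN1le
    have hc1r : LinearIndependent ℝ c1 :=
      li_real_of_li_int hb1li hc1z (fun i => hN1le (hc1mem i))
    have hdetc1 : 1 ≤ (gramM c1).det := by
      have h := hsub1 N1 (SetLike.coe_subset_coe.mpr hN1M1) (Real.sqrt (gramM c1).det)
        ⟨r1, c1, hc1r, by rw [hc1sp], rfl⟩
      exact Real.one_le_sqrt.mp h
    -- reconstruct K from N1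
    have hKrec : ∀ z ∈ K, J1 (P1 z) = z := by
      intro z hz
      have h0 : projRE z = 0 := hz.2
      show appendE (projLE z) 0 = z
      rw [← h0]
      exact appendE_proj z
    set a1 : Fin r1 → EuclideanSpace ℝ (Fin (n + m)) := fun i => J1 (c1 i) with ha1def
    have hKspan : Submodule.span ℤ (Set.range a1) = K := by
      have hra : Set.range a1 = ⇑J1 '' Set.range c1 := Set.range_comp _ _
      rw [hra, ← Submodule.map_span, hc1sp, hN1def]
      ext z
      constructor
      · rintro ⟨_, ⟨u, hu, rfl⟩, rfl⟩
        rw [hKrec u hu]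
        exact hu
      · intro hz
        exact ⟨P1 z, ⟨z, hz, rfl⟩, hKrec z hz⟩
    have ha1K : ∀ i, a1 i ∈ K := fun i =>
      hKspan ▸ Submodule.subset_span (Set.mem_range_self i)
    -- lift the basis of N2
    have hw_ex : ∀ j, ∃ z, z ∈ L ∧ P2 z = c2 j := by
      intro j
      obtain ⟨z, hz, hez⟩ := hc2mem j
      exact ⟨z, hz, hez⟩
    choose w hwL hwP using hw_ex
    -- linear independence of the combined family
    have ha1li : LinearIndependent ℝ a1 :=
      hc1r.map' inclLE (LinearMap.ker_eq_bot.mpr hinclLE_inj)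
    have hwli : LinearIndependent ℝ w := by
      have hcomp : ⇑(projRE (n := n) (m := m)) ∘ w = c2 := funext hwP
      have h5 : LinearIndependent ℝ (⇑(projRE (n := n) (m := m)) ∘ w) := by
        rw [hcomp]; exact hc2r
      exact LinearIndependent.of_comp _ h5
    have hkerR : Submodule.span ℝ (Set.range a1) ≤ LinearMap.ker (projRE (n := n) (m := m)) := by
      rw [Submodule.span_le]
      rintro _ ⟨i, rfl⟩
      simp only [SetLike.mem_coe, LinearMap.mem_ker]
      exact projRE_inclLE (c1 i)
    have hdisj2 : Disjoint (Submodule.span ℝ (Set.range a1)) (Submodule.span ℝ (Set.range w)) := by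
      rw [Submodule.disjoint_def]
      intro x hx1 hx2
      have h0 : projRE x = 0 := hkerR hx1
      obtain ⟨g, hg⟩ := (Submodule.mem_span_range_iff_exists_fun ℝ).mp hx2
      have h3 : projRE (∑ j, g j • w j) = ∑ j, g j • c2 j := by
        rw [map_sum]
        exact Finset.sum_congr rfl fun j _ => by
          rw [LinearMap.map_smul]
          exact congrArg (fun u => g j • u) (hwP j)
      rw [hg, h0] at h3
      have hz := Fintype.linearIndependent_iff.mp hc2r g h3.symm
      rw [← hg]
      exact Finset.sum_eq_zero fun j _ => by rw [hz j, zero_smul]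
    have hsumli2 : LinearIndependent ℝ (Sum.elim a1 w) := ha1li.sum_type hwli hdisj2
    -- the combined family spans L
    have hrange_sum : Set.range (Sum.elim a1 w) = Set.range a1 ∪ Set.range w :=
      Sum.elim_range _ _
    have hspan_sum : Submodule.span ℤ (Set.range (Sum.elim a1 w)) = L := by
      apply le_antisymm
      · rw [hrange_sum, Submodule.span_union]
        refine sup_le ?_ ?_
        · rw [hKspan]
          exact inf_le_left
        · rw [Submodule.span_le]
          rintro _ ⟨j, rfl⟩
          exact hwL j
      · intro z hz
        have hPz : P2 z ∈ Submodule.span ℤ (Set.range c2) := by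
          rw [hc2sp]
          exact ⟨z, hz, rfl⟩
        obtain ⟨g, hg⟩ := (Submodule.mem_span_range_iff_exists_fun ℤ).mp hPz
        set t : EuclideanSpace ℝ (Fin (n + m)) := ∑ j, g j • w j with htdef
        have htS : t ∈ Submodule.span ℤ (Set.range (Sum.elim a1 w)) :=
          Submodule.sum_mem _ fun j _ => Submodule.smul_mem _ _
            (Submodule.subset_span ⟨Sum.inr j, rfl⟩)
        have htL : t ∈ L := Submodule.sum_mem _ fun j _ => Submodule.smul_mem _ _ (hwL j)
        have hPt : P2 t = P2 z := by
          rw [htdef, map_sum, ← hg]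
          exact Finset.sum_congr rfl fun j _ => by rw [LinearMap.map_smul, hwP j]
        have hzt : z - t ∈ K := by
          refine ⟨Submodule.sub_mem L hz htL, ?_⟩
          show P2 (z - t) = 0
          rw [map_sub, hPt, sub_self]
        have hzma : z - t ∈ Submodule.span ℤ (Set.range (Sum.elim a1 w)) := by
          rw [← hKspan] at hzt
          refine Submodule.span_mono ?_ hzt
          rintro _ ⟨i, rfl⟩
          exact ⟨Sum.inl i, rfl⟩
        have := Submodule.add_mem _ hzma htS
        rwa [sub_add_cancel] at this
    -- transport along the equivalence
    set ee := finSumFinEquiv (m := r1) (n := r2) with heedef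
    set cc2 : Fin (r1 + r2) → EuclideanSpace ℝ (Fin (n + m)) := (Sum.elim a1 w) ∘ ee.symm
      with hcc2def
    have hccli : LinearIndependent ℝ cc2 := hsumli2.comp _ ee.symm.injective
    have hccsp : Submodule.span ℤ (Set.range cc2) = L := by
      rw [hcc2def, ee.symm.surjective.range_comp, hspan_sum]
    have hdet_eq : (gramM b).det = (gramM cc2).det :=
      det_gramM_eq_of_span_int_eq hbli hccli (by rw [hccsp, ← hL])
    have hdet_cc : (gramM cc2).det = (gramM (Sum.elim a1 w)).det :=
      det_gramM_comp_equiv ee.symm _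
    -- orthogonalize the lifted vectors against span a1
    set W : Submodule ℝ (EuclideanSpace ℝ (Fin (n + m))) := Submodule.span ℝ (Set.range a1)
      with hWdef
    haveI : FiniteDimensional ℝ W := FiniteDimensional.span_of_finite ℝ (Set.finite_range a1)
    set w' : Fin r2 → EuclideanSpace ℝ (Fin (n + m)) :=
      fun j => w j - (Submodule.orthogonalProjection W (w j) : EuclideanSpace ℝ (Fin (n + m))) with hw'def
    have hworth : ∀ i j, (inner ℝ (a1 i) (w' j) : ℝ) = 0 := by
      intro i j
      have hmem2 := Submodule.sub_starProjection_mem_orthogonal (K := W) (w j)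
      exact (Submodule.mem_orthogonal W _).mp hmem2 (a1 i)
        (Submodule.subset_span (Set.mem_range_self i))
    have hdet_w' : (gramM (Sum.elim a1 w)).det = (gramM (Sum.elim a1 w')).det := by
      have hproj : ∀ j, ∃ S : Fin r1 → ℝ,
          (∑ i, S i • a1 i) = (Submodule.orthogonalProjection W (w j) : EuclideanSpace ℝ (Fin (n + m))) :=
        fun j => (Submodule.mem_span_range_iff_exists_fun ℝ).mp (Submodule.orthogonalProjection W (w j)).2
      choose S hS using hproj
      set T : Matrix (Fin r1 ⊕ Fin r2) (Fin r1 ⊕ Fin r2) ℝ :=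
        Matrix.fromBlocks 1 0 (Matrix.of fun j i => -(S j i)) 1 with hT
      have htrans : Sum.elim a1 w' = fun k => ∑ l, T k l • (Sum.elim a1 w) l := by
        funext k
        cases k with
        | inl i =>
          rw [Fintype.sum_sum_type]
          have e1 : (∑ k, T (Sum.inl i) (Sum.inl k) • (Sum.elim a1 w) (Sum.inl k)) = a1 i := by
            simp [hT, Matrix.one_apply, ite_smul]
          have e2 : (∑ l, T (Sum.inl i) (Sum.inr l) • (Sum.elim a1 w) (Sum.inr l)) = 0 := by
            simp [hT]
          rw [e1, e2, add_zero]
          rfl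
        | inr j =>
          rw [Fintype.sum_sum_type]
          have e1 : (∑ k, T (Sum.inr j) (Sum.inl k) • (Sum.elim a1 w) (Sum.inl k)) =
              -(Submodule.orthogonalProjection W (w j) : EuclideanSpace ℝ (Fin (n + m))) := by
            rw [← hS j, ← Finset.sum_neg_distrib]
            exact Finset.sum_congr rfl fun k _ => by simp [hT, neg_smul]
          have e2 : (∑ l, T (Sum.inr j) (Sum.inr l) • (Sum.elim a1 w) (Sum.inr l)) = w j := by
            simp [hT, Matrix.one_apply, ite_smul]
          rw [e1, e2]
          show w j - (Submodule.orthogonalProjection W (w j) : EuclideanSpace ℝ (Fin (n + m))) =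
            -(Submodule.orthogonalProjection W (w j) : EuclideanSpace ℝ (Fin (n + m))) + w j
          exact sub_eq_neg_add _ _
      rw [htrans, gramM_transform, Matrix.det_mul, Matrix.det_mul, Matrix.det_transpose]
      have hdetT : T.det = 1 := by
        rw [hT, Matrix.det_fromBlocks_zero₁₂]
        simp
      rw [hdetT, one_mul, mul_one]
    have hdet_block : (gramM (Sum.elim a1 w')).det = (gramM a1).det * (gramM w').det :=
      det_gramM_sum_elim _ _ hworth
    have ha1c1 : gramM a1 = gramM c1 := by
      ext i j
      show (inner ℝ (appendE (c1 i) 0) (appendE (c1 j) 0) : ℝ) = inner ℝ (c1 i) (c1 j)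
      rw [inner_appendE]
      simp
    have hWker : ∀ z ∈ W, projRE z = 0 := by
      intro z hz
      have : W ≤ LinearMap.ker (projRE (n := n) (m := m)) := hkerR
      exact this hz
    have hPRw' : ∀ j, projRE (w' j) = c2 j := by
      intro j
      rw [hw'def]
      show projRE (w j - _) = c2 j
      rw [map_sub, hWker _ (Submodule.orthogonalProjection W (w j)).2, sub_zero]
      exact hwP j
    have hgw' : gramM w' = gramM (fun j => projLE (w' j)) + gramM c2 := by
      ext i j
      show (inner ℝ (w' i) (w' j) : ℝ) = _
      rw [Matrix.add_apply]
      rw [inner_proj_decomp (w' i) (w' j), hPRw' i, hPRw' j]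
      rfl
    have hdetw'ge : (gramM c2).det ≤ (gramM w').det := by
      rw [hgw']
      exact det_le_det_add (gramM_posSemidef _) (gramM_posSemidef _)
    have hge1 : 1 ≤ (gramM b).det := by
      rw [hdet_eq, hdet_cc, hdet_w', hdet_block, ha1c1]
      calc (1 : ℝ) = 1 * 1 := by ring
        _ ≤ (gramM c1).det * (gramM c2).det :=
            mul_le_mul hdetc1 hdetc2 zero_le_one (le_trans zero_le_one hdetc1)
        _ ≤ (gramM c1).det * (gramM w').det :=
            mul_le_mul_of_nonneg_left hdetw'ge (le_trans zero_le_one hdetc1)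
    rw [hv]
    exact Real.one_le_sqrt.mpr hge1
end
end

section
/- For any full-rank lattice L in R^n and any s > 0, rho_s(L) * gamma_s(V(L)) <= 1, where V(L) is the Voronoi cell of L and gamma_s is the Gaussian measure with parameter s. -/
open scoped Real Pointwise
open MeasureTheory Set

noncomputable section

variable {E : Type*} [NormedAddCommGroup E] [InnerProductSpace ℝ E]

namespace RhoGaussAux

lemma aux_pointwise {F : Type*} [NormedAddCommGroup F] [InnerProductSpace ℝ F] (x v : F) :
    2 * (Real.exp (-π * ‖v‖ ^ 2) * Real.exp (-π * ‖x‖ ^ 2)) ≤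
      Real.exp (-π * ‖x + v‖ ^ 2) + Real.exp (-π * ‖x - v‖ ^ 2) := by
  have hpar : ‖x + v‖ ^ 2 + ‖x - v‖ ^ 2 = 2 * ‖x‖ ^ 2 + 2 * ‖v‖ ^ 2 := by
    have h1 := norm_add_sq_real x v
    have h2 := norm_sub_sq_real x v
    linarith
  set a := Real.exp (-π * ‖x + v‖ ^ 2 / 2) with ha
  set b := Real.exp (-π * ‖x - v‖ ^ 2 / 2) with hb
  have key : 2 * (a * b) ≤ a ^ 2 + b ^ 2 := by nlinarith [two_mul_le_add_sq a b]
  have ha2 : a ^ 2 = Real.exp (-π * ‖x + v‖ ^ 2) := by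
    rw [sq, ha, ← Real.exp_add]; ring_nf
  have hb2 : b ^ 2 = Real.exp (-π * ‖x - v‖ ^ 2) := by
    rw [sq, hb, ← Real.exp_add]; ring_nf
  have hab : a * b = Real.exp (-π * ‖v‖ ^ 2) * Real.exp (-π * ‖x‖ ^ 2) := by
    rw [ha, hb, ← Real.exp_add, ← Real.exp_add]
    congr 1
    linear_combination (-π / 2) * hpar
  rw [← ha2, ← hb2, ← hab]; exact key

lemma aux_integrable {n : ℕ} :
    Integrable (fun x : EuclideanSpace ℝ (Fin n) => Real.exp (-π * ‖x‖ ^ 2)) := by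
  have h := GaussianFourier.integrable_cexp_neg_mul_sq_norm_add
    (V := EuclideanSpace ℝ (Fin n)) (b := (π : ℂ)) (by simpa using Real.pi_pos) 0 0
  have := h.norm
  refine this.congr (Filter.Eventually.of_forall fun x => ?_)
  simp only [Complex.norm_exp]
  norm_num
  rw [← Complex.ofReal_pow, Complex.ofReal_re]

lemma aux_integral {n : ℕ} :
    ∫ x : EuclideanSpace ℝ (Fin n), Real.exp (-π * ‖x‖ ^ 2) = 1 := by
  have := GaussianFourier.integral_rexp_neg_mul_sq_norm
    (V := EuclideanSpace ℝ (Fin n)) Real.pi_pos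
  simpa [div_self Real.pi_pos.ne'] using this

lemma aux_symm_integral {n : ℕ} (W : Set (EuclideanSpace ℝ (Fin n))) (hW : MeasurableSet W)
    (hsym : ∀ x ∈ W, -x ∈ W) (v : EuclideanSpace ℝ (Fin n)) :
    ∫ x in W, Real.exp (-π * ‖x + v‖ ^ 2) = ∫ x in W, Real.exp (-π * ‖x - v‖ ^ 2) := by
  have hmem : ∀ x, x ∈ W ↔ -x ∈ W := fun x =>
    ⟨fun h => hsym x h, fun h => by simpa using hsym (-x) h⟩
  rw [← integral_indicator hW, ← integral_indicator hW]
  rw [← integral_neg_eq_self (W.indicator fun x => Real.exp (-π * ‖x + v‖ ^ 2)) volume]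
  congr 1
  ext x
  by_cases hx : x ∈ W
  · rw [Set.indicator_of_mem ((hmem x).mp hx), Set.indicator_of_mem hx]
    congr 2
    rw [show -x + v = -(x - v) by abel, norm_neg]
  · rw [Set.indicator_of_notMem (fun h => hx (by simpa using hsym _ h)),
      Set.indicator_of_notMem hx]

lemma aux_key {n : ℕ} (W : Set (EuclideanSpace ℝ (Fin n))) (hW : MeasurableSet W)
    (hsym : ∀ x ∈ W, -x ∈ W) (v : EuclideanSpace ℝ (Fin n)) :
    Real.exp (-π * ‖v‖ ^ 2) * ∫ x in W, Real.exp (-π * ‖x‖ ^ 2) ≤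
      ∫ x in W, Real.exp (-π * ‖x + v‖ ^ 2) := by
  have hint : Integrable (fun x : EuclideanSpace ℝ (Fin n) => Real.exp (-π * ‖x‖ ^ 2)) :=
    aux_integrable
  have h1 : Integrable (fun x : EuclideanSpace ℝ (Fin n) => Real.exp (-π * ‖x + v‖ ^ 2)) :=
    hint.comp_add_right v
  have h2 : Integrable (fun x : EuclideanSpace ℝ (Fin n) => Real.exp (-π * ‖x - v‖ ^ 2)) := by
    simpa [sub_eq_add_neg] using hint.comp_add_right (-v)
  have hmono : ∫ x in W, 2 * (Real.exp (-π * ‖v‖ ^ 2) * Real.exp (-π * ‖x‖ ^ 2)) ≤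
      ∫ x in W, (Real.exp (-π * ‖x + v‖ ^ 2) + Real.exp (-π * ‖x - v‖ ^ 2)) := by
    refine setIntegral_mono_on ?_ ?_ hW fun x _ => aux_pointwise x v
    · exact ((hint.const_mul _).const_mul _).integrableOn
    · exact (h1.add h2).integrableOn
  rw [integral_add h1.integrableOn h2.integrableOn, ← aux_symm_integral W hW hsym v,
    integral_const_mul, integral_const_mul] at hmono
  linarith

lemma aux_translate {n : ℕ} (W : Set (EuclideanSpace ℝ (Fin n))) (hW : MeasurableSet W)
    (v : EuclideanSpace ℝ (Fin n)) :
    ∫ x in (fun x => x - v) ⁻¹' W, Real.exp (-π * ‖x‖ ^ 2) =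
      ∫ x in W, Real.exp (-π * ‖x + v‖ ^ 2) := by
  have hTm : MeasurableSet ((fun x => x - v) ⁻¹' W) :=
    measurableSet_preimage (measurable_id.sub_const v) hW
  rw [← integral_indicator hTm, ← integral_indicator hW,
    ← integral_add_right_eq_self
      (((fun x => x - v) ⁻¹' W).indicator fun x => Real.exp (-π * ‖x‖ ^ 2)) v]
  congr 1; ext x
  by_cases hx : x ∈ W
  · rw [Set.indicator_of_mem (by simpa using hx), Set.indicator_of_mem hx]
  · rw [Set.indicator_of_notMem (by simpa using hx), Set.indicator_of_notMem hx]

lemma aux_hyperplane {n : ℕ} (v v' : EuclideanSpace ℝ (Fin n)) (hvv : v ≠ v') :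
    volume {x : EuclideanSpace ℝ (Fin n) | ‖x - v‖ = ‖x - v'‖} = 0 := by
  set w := v' - v with hw
  have hw0 : w ≠ 0 := sub_ne_zero.mpr (Ne.symm hvv)
  set r : ℝ := (‖v'‖ ^ 2 - ‖v‖ ^ 2) / 2 with hr
  set K : Submodule ℝ (EuclideanSpace ℝ (Fin n)) := LinearMap.ker (innerSL ℝ w : EuclideanSpace ℝ (Fin n) →ₗ[ℝ] ℝ) with hK
  have hKtop : K ≠ ⊤ := by
    intro h
    have hmem : w ∈ K := h ▸ Submodule.mem_top
    have : (inner ℝ w w : ℝ) = 0 := by simpa [hK, LinearMap.mem_ker] using hmem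
    exact hw0 (inner_self_eq_zero.mp this)
  set x₀ := (r / ‖w‖ ^ 2) • w with hx₀
  have hsubset : {x : EuclideanSpace ℝ (Fin n) | ‖x - v‖ = ‖x - v'‖} ⊆
      (fun x => x - x₀) ⁻¹' (K : Set _) := by
    intro x hx
    have hx' : ‖x - v‖ ^ 2 = ‖x - v'‖ ^ 2 := by rw [Set.mem_setOf_eq.mp hx]
    rw [norm_sub_sq_real, norm_sub_sq_real] at hx'
    have hinner : (inner ℝ x w : ℝ) = r := by
      rw [hw, inner_sub_right, hr]; linarith [hx']
    show x - x₀ ∈ K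
    rw [hK, LinearMap.mem_ker]
    have h0 : (inner ℝ w (x - x₀) : ℝ) = 0 := by
      rw [inner_sub_right, hx₀, real_inner_smul_right, real_inner_self_eq_norm_sq,
        real_inner_comm, hinner]
      have hnw : ‖w‖ ≠ 0 := norm_ne_zero_iff.mpr hw0
      field_simp; ring
    simpa [innerSL_apply_apply] using h0
  refine measure_mono_null hsubset ?_
  have htrans : volume ((fun x => x + (-x₀)) ⁻¹' (K : Set (EuclideanSpace ℝ (Fin n)))) =
      volume (K : Set (EuclideanSpace ℝ (Fin n))) :=
    measure_preimage_add_right volume (-x₀) (K : Set (EuclideanSpace ℝ (Fin n)))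
  rw [show (fun x : EuclideanSpace ℝ (Fin n) => x - x₀) = fun x => x + (-x₀) from
    funext fun x => sub_eq_add_neg x x₀, htrans]
  exact Measure.addHaar_submodule volume K hKtop

end RhoGaussAux

set_option maxHeartbeats 2000000 in
/-- `ρ_s(L) · γ_s(V(L)) ≤ 1`. -/
theorem rho_mul_gauss_voronoi_le_one {n : ℕ}
    (L : Submodule ℤ (EuclideanSpace ℝ (Fin n))) (hL : IsLatticeOfRank L n)
    (s : ℝ) (hs : 0 < s) :
    rhoS s (L : Set (EuclideanSpace ℝ (Fin n))) * gauss s (voronoi L) ≤ 1 := by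
  classical
  obtain ⟨bb, hb_li, hb_span⟩ := hL
  have hcount : Countable (L : Set (EuclideanSpace ℝ (Fin n))) := by
    rw [hb_span]
    exact inferInstanceAs (Countable (Submodule.span ℤ (Set.range bb)))
  set W : Set (EuclideanSpace ℝ (Fin n)) :=
    {x | ∀ y ∈ L, ‖x‖ ≤ ‖s⁻¹ • y - x‖} with hWdef
  have hsnorm : ∀ u : EuclideanSpace ℝ (Fin n), ‖s • u‖ = s * ‖u‖ := fun u => by
    rw [norm_smul, Real.norm_eq_abs, abs_of_pos hs]
  have hWeq : s⁻¹ • voronoi L = W := by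
    ext x
    rw [Set.mem_smul_set_iff_inv_smul_mem₀ (inv_ne_zero hs.ne') _ _, inv_inv]
    simp only [voronoi, Set.mem_setOf_eq, hWdef]
    constructor
    · intro h y hy
      have h2 := h y hy
      rw [show y - s • x = s • (s⁻¹ • y - x) by
          rw [smul_sub, smul_inv_smul₀ hs.ne'], hsnorm, hsnorm] at h2
      exact le_of_mul_le_mul_left h2 hs
    · intro h y hy
      have h2 := mul_le_mul_of_nonneg_left (h y hy) hs.le
      rwa [← hsnorm, ← hsnorm, smul_sub, smul_inv_smul₀ hs.ne'] at h2
  have hWclosed : IsClosed W := by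
    have hrw : W = ⋂ y : ↥(L : Set (EuclideanSpace ℝ (Fin n))),
        {x | ‖x‖ ≤ ‖s⁻¹ • (y : EuclideanSpace ℝ (Fin n)) - x‖} := by
      ext x
      simp only [hWdef, Set.mem_setOf_eq, Set.mem_iInter, Subtype.forall, SetLike.mem_coe]
    rw [hrw]
    exact isClosed_iInter fun y =>
      isClosed_le continuous_norm ((continuous_const.sub continuous_id).norm)
  have hWm : MeasurableSet W := hWclosed.measurableSet
  have hsym : ∀ x ∈ W, -x ∈ W := by
    intro x hx
    simp only [hWdef, Set.mem_setOf_eq] at hx ⊢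
    intro y hy
    have h2 := hx (-y) (neg_mem hy)
    rw [smul_neg, show -(s⁻¹ • y) - x = -(s⁻¹ • y + x) by abel, norm_neg] at h2
    rwa [norm_neg, sub_neg_eq_add]
  set μ : Measure (EuclideanSpace ℝ (Fin n)) :=
    volume.withDensity (fun x => ENNReal.ofReal (Real.exp (-π * ‖x‖ ^ 2))) with hμdef
  have hμ_apply : ∀ A : Set (EuclideanSpace ℝ (Fin n)), MeasurableSet A →
      μ A = ENNReal.ofReal (∫ x in A, Real.exp (-π * ‖x‖ ^ 2)) := by
    intro A hA
    rw [hμdef, withDensity_apply _ hA,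
      ← ofReal_integral_eq_lintegral_ofReal (RhoGaussAux.aux_integrable.integrableOn)
        (Filter.Eventually.of_forall fun x => Real.exp_nonneg _)]
  have hμ_univ : μ Set.univ = 1 := by
    rw [hμ_apply _ MeasurableSet.univ, Measure.restrict_univ, RhoGaussAux.aux_integral,
      ENNReal.ofReal_one]
  set T : ↥(L : Set (EuclideanSpace ℝ (Fin n))) → Set (EuclideanSpace ℝ (Fin n)) :=
    fun y => (fun x => x - s⁻¹ • (y : EuclideanSpace ℝ (Fin n))) ⁻¹' W with hTdef
  have hTm : ∀ y, MeasurableSet (T y) := fun y =>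
    measurableSet_preimage (measurable_id.sub_const _) hWm
  set I : ℝ := ∫ x in W, Real.exp (-π * ‖x‖ ^ 2) with hIdef
  have hI0 : 0 ≤ I := setIntegral_nonneg hWm fun x _ => Real.exp_nonneg _
  set e : ↥(L : Set (EuclideanSpace ℝ (Fin n))) → ℝ :=
    fun y => Real.exp (-π * ‖(y : EuclideanSpace ℝ (Fin n))‖ ^ 2 / s ^ 2) with hedef
  have hkey : ∀ y : ↥(L : Set (EuclideanSpace ℝ (Fin n))),
      ENNReal.ofReal (e y * I) ≤ μ (T y) := by
    intro y
    rw [hμ_apply _ (hTm y)]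
    refine ENNReal.ofReal_le_ofReal ?_
    have hexp : e y = Real.exp (-π * ‖s⁻¹ • (y : EuclideanSpace ℝ (Fin n))‖ ^ 2) := by
      have hn : ‖s⁻¹ • (y : EuclideanSpace ℝ (Fin n))‖ ^ 2 =
          s⁻¹ ^ 2 * ‖(y : EuclideanSpace ℝ (Fin n))‖ ^ 2 := by
        rw [norm_smul, Real.norm_eq_abs, abs_of_pos (inv_pos.mpr hs), mul_pow]
      simp only [hedef, hn, Real.exp_eq_exp]
      field_simp
    calc e y * I = Real.exp (-π * ‖s⁻¹ • (y : EuclideanSpace ℝ (Fin n))‖ ^ 2) * I := by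
          rw [hexp]
      _ ≤ ∫ x in W, Real.exp (-π * ‖x + s⁻¹ • (y : EuclideanSpace ℝ (Fin n))‖ ^ 2) :=
          RhoGaussAux.aux_key W hWm hsym _
      _ = ∫ x in T y, Real.exp (-π * ‖x‖ ^ 2) := by
          rw [hTdef]
          exact (RhoGaussAux.aux_translate W hWm _).symm
  have hdisj : Pairwise (Function.onFun (MeasureTheory.AEDisjoint μ) T) := by
    intro y z hyz
    have hv : s⁻¹ • (y : EuclideanSpace ℝ (Fin n)) ≠ s⁻¹ • (z : EuclideanSpace ℝ (Fin n)) := by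
      intro h
      exact hyz (Subtype.ext
        (smul_right_injective (EuclideanSpace ℝ (Fin n)) (inv_ne_zero hs.ne') h))
    have hnull := RhoGaussAux.aux_hyperplane
      (s⁻¹ • (y : EuclideanSpace ℝ (Fin n))) (s⁻¹ • (z : EuclideanSpace ℝ (Fin n))) hv
    refine measure_mono_null ?_ ((withDensity_absolutelyContinuous volume _) hnull)
    intro x hx
    obtain ⟨hx1, hx2⟩ := hx
    simp only [hTdef, Set.mem_preimage, hWdef, Set.mem_setOf_eq] at hx1 hx2
    have hzy : (z : EuclideanSpace ℝ (Fin n)) - (y : EuclideanSpace ℝ (Fin n)) ∈ L :=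
      sub_mem (SetLike.mem_coe.mp z.2) (SetLike.mem_coe.mp y.2)
    have hyz2 : (y : EuclideanSpace ℝ (Fin n)) - (z : EuclideanSpace ℝ (Fin n)) ∈ L :=
      sub_mem (SetLike.mem_coe.mp y.2) (SetLike.mem_coe.mp z.2)
    have h1 := hx1 _ hzy
    have h2 := hx2 _ hyz2
    rw [show s⁻¹ • ((z : EuclideanSpace ℝ (Fin n)) - (y : EuclideanSpace ℝ (Fin n))) -
        (x - s⁻¹ • (y : EuclideanSpace ℝ (Fin n))) =
        -(x - s⁻¹ • (z : EuclideanSpace ℝ (Fin n))) by rw [smul_sub]; abel, norm_neg] at h1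
    rw [show s⁻¹ • ((y : EuclideanSpace ℝ (Fin n)) - (z : EuclideanSpace ℝ (Fin n))) -
        (x - s⁻¹ • (z : EuclideanSpace ℝ (Fin n))) =
        -(x - s⁻¹ • (y : EuclideanSpace ℝ (Fin n))) by rw [smul_sub]; abel, norm_neg] at h2
    exact le_antisymm h1 h2
  by_cases hsummable : Summable e
  · have hglobal : ∑' y : ↥(L : Set (EuclideanSpace ℝ (Fin n))),
        ENNReal.ofReal (e y * I) ≤ 1 := by
      calc ∑' y : ↥(L : Set (EuclideanSpace ℝ (Fin n))), ENNReal.ofReal (e y * I)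
          ≤ ∑' y : ↥(L : Set (EuclideanSpace ℝ (Fin n))), μ (T y) :=
            ENNReal.tsum_le_tsum hkey
        _ = μ (⋃ y : ↥(L : Set (EuclideanSpace ℝ (Fin n))), T y) :=
            (measure_iUnion₀ hdisj fun y => (hTm y).nullMeasurableSet).symm
        _ ≤ μ Set.univ := measure_mono (Set.subset_univ _)
        _ = 1 := hμ_univ
    have hofreal : ENNReal.ofReal
        (∑' y : ↥(L : Set (EuclideanSpace ℝ (Fin n))), e y * I) ≤ 1 := by
      rw [ENNReal.ofReal_tsum_of_nonneg (fun y => mul_nonneg (Real.exp_nonneg _) hI0)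
        (hsummable.mul_right I)]
      exact hglobal
    have hreal : (∑' y : ↥(L : Set (EuclideanSpace ℝ (Fin n))), e y * I) ≤ 1 :=
      ENNReal.ofReal_le_one.mp hofreal
    have hrho : rhoS s (L : Set (EuclideanSpace ℝ (Fin n))) =
        ∑' y : ↥(L : Set (EuclideanSpace ℝ (Fin n))), e y := rfl
    have hgauss : gauss s (voronoi L) = I := by
      simp only [gauss, hWeq, hIdef]
    rw [hrho, hgauss, ← tsum_mul_right]
    exact hreal
  · have hrho : rhoS s (L : Set (EuclideanSpace ℝ (Fin n))) = 0 :=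
      tsum_eq_zero_of_not_summable hsummable
    rw [hrho, zero_mul]
    exact zero_le_one
end
end

section
/- For any full-rank lattice L in R^n, any lattice vector y in L, and any s > 0, the Gaussian measure of the translated Voronoi cell satisfies exp(-pi*||y||^2/s^2) * gamma_s(V(L)) <= gamma_s(V(L) + y) <= gamma_s(V(L)). -/
open scoped Real Pointwise
open MeasureTheory Set

noncomputable section

variable {E : Type*} [NormedAddCommGroup E] [InnerProductSpace ℝ E]

namespace Helper

variable {n : ℕ}

local notation "E" => EuclideanSpace ℝ (Fin n)

lemma gaussianIntegrable : Integrable (fun x : E => Real.exp (-π * ‖x‖ ^ 2)) := by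
  have h := GaussianFourier.integrable_cexp_neg_mul_sq_norm_add
    (V := EuclideanSpace ℝ (Fin n)) (b := (π : ℂ)) (by simpa using Real.pi_pos) 0 0
  refine h.norm.congr (Filter.Eventually.of_forall fun x => ?_)
  simp [Complex.norm_exp, ← Complex.ofReal_pow]

lemma exp_avg (A B : ℝ) : 2 * Real.exp ((A + B) / 2) ≤ Real.exp A + Real.exp B := by
  have h1 : Real.exp A = Real.exp (A / 2) * Real.exp (A / 2) := by
    rw [← Real.exp_add]; ring_nf
  have h2 : Real.exp B = Real.exp (B / 2) * Real.exp (B / 2) := by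
    rw [← Real.exp_add]; ring_nf
  have h3 : Real.exp ((A + B) / 2) = Real.exp (A / 2) * Real.exp (B / 2) := by
    rw [← Real.exp_add]; ring_nf
  nlinarith [sq_nonneg (Real.exp (A / 2) - Real.exp (B / 2))]

lemma setIntegral_translate (W : Set E) (hW : MeasurableSet W) (c : E) (f : E → ℝ) :
    ∫ x in (fun x => x + c) '' W, f x = ∫ x in W, f (x + c) := by
  have hA : (fun x : E => x + c) '' W = (fun x : E => x - c) ⁻¹' W := by
    ext z
    constructor
    · rintro ⟨w, hw, rfl⟩; simpa using hw
    · intro h; exact ⟨z - c, h, by simp⟩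
  have hAmeas : MeasurableSet ((fun x : E => x + c) '' W) := by
    rw [hA]; exact (measurable_sub_const c) hW
  rw [← integral_indicator hAmeas, ← integral_indicator hW,
    ← MeasureTheory.integral_add_right_eq_self
      (((fun x : E => x + c) '' W).indicator f) c]
  congr 1
  funext x
  by_cases hx : x ∈ W
  · rw [Set.indicator_of_mem, Set.indicator_of_mem hx]
    rw [hA]; simpa using hx
  · rw [Set.indicator_of_notMem, Set.indicator_of_notMem hx]
    rw [hA]; simpa using hx

lemma setIntegral_neg_symm (W : Set E) (hW : MeasurableSet W)
    (hsymm : ∀ x : E, -x ∈ W ↔ x ∈ W) (f : E → ℝ) :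
    ∫ x in W, f x = ∫ x in W, f (-x) := by
  rw [← integral_indicator hW, ← integral_indicator hW,
    ← MeasureTheory.integral_neg_eq_self (W.indicator f)]
  congr 1
  funext x
  by_cases hx : x ∈ W
  · rw [Set.indicator_of_mem, Set.indicator_of_mem hx]
    exact (hsymm x).mpr hx
  · rw [Set.indicator_of_notMem, Set.indicator_of_notMem hx]
    exact fun h => hx ((hsymm x).mp h)

end Helper

/-- Gaussian measure of the translated Voronoi cell. -/
theorem gauss_translated_voronoi {n : ℕ}
    (L : Submodule ℤ (EuclideanSpace ℝ (Fin n))) (hL : IsLatticeOfRank L n)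
    (y : EuclideanSpace ℝ (Fin n)) (hy : y ∈ L) (s : ℝ) (hs : 0 < s) :
    Real.exp (-π * ‖y‖ ^ 2 / s ^ 2) * gauss s (voronoi L) ≤
        gauss s ((fun x => x + y) '' voronoi L) ∧
      gauss s ((fun x => x + y) '' voronoi L) ≤ gauss s (voronoi L) := by
  have hsne : s ≠ 0 := hs.ne'
  set V := voronoi L with hVdef
  set f : EuclideanSpace ℝ (Fin n) → ℝ := fun x => Real.exp (-π * ‖x‖ ^ 2) with hf
  set W : Set (EuclideanSpace ℝ (Fin n)) := s⁻¹ • V with hWdef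
  set c : EuclideanSpace ℝ (Fin n) := s⁻¹ • y with hcdef
  have hVmem : ∀ x, x ∈ V ↔ ∀ z ∈ L, ‖x‖ ≤ ‖z - x‖ := fun x => Iff.rfl
  have hVsymm : ∀ x ∈ V, -x ∈ V := by
    intro x hx
    rw [hVmem] at hx ⊢
    intro z hz
    have h := hx (-z) (neg_mem hz)
    calc ‖-x‖ = ‖x‖ := norm_neg x
    _ ≤ ‖-z - x‖ := h
    _ = ‖z - -x‖ := by rw [show (-z - x : EuclideanSpace ℝ (Fin n)) = -(z - -x) by abel, norm_neg]
  have hVclosed : IsClosed V := by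
    have : V = ⋂ z ∈ (L : Set (EuclideanSpace ℝ (Fin n))), {x | ‖x‖ ≤ ‖z - x‖} := by
      ext x; simp [hVmem x]
    rw [this]
    exact isClosed_biInter fun z _ =>
      isClosed_le continuous_norm ((continuous_const.sub continuous_id).norm)
  have hWmem : ∀ x, x ∈ W ↔ s • x ∈ V := by
    intro x
    rw [hWdef, mem_smul_set_iff_inv_smul_mem₀ (inv_ne_zero hsne), inv_inv]
  have hWmeas : MeasurableSet W := by
    have : W = (fun x : EuclideanSpace ℝ (Fin n) => s • x) ⁻¹' V := by
      ext x; rw [hWmem]; rfl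
    rw [this]
    exact (measurable_const_smul s) hVclosed.measurableSet
  have hWsymm : ∀ x, -x ∈ W ↔ x ∈ W := by
    intro x
    rw [hWmem, hWmem, smul_neg]
    exact ⟨fun h => by simpa using hVsymm _ h, fun h => hVsymm _ h⟩
  have hub : ∀ x ∈ W, ‖x‖ ≤ ‖x + c‖ := by
    intro x hx
    have h := (hVmem _).1 ((hWmem x).1 hx) (-y) (neg_mem hy)
    have e1 : s⁻¹ • (s • x) = x := inv_smul_smul₀ hsne x
    have e2 : s⁻¹ • (-y - s • x) = -c - x := by
      rw [smul_sub, smul_neg, inv_smul_smul₀ hsne, hcdef]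
    have h2 : ‖x‖ ≤ ‖-c - x‖ := by
      calc ‖x‖ = ‖s⁻¹‖ * ‖s • x‖ := by rw [← norm_smul, e1]
      _ ≤ ‖s⁻¹‖ * ‖-y - s • x‖ := mul_le_mul_of_nonneg_left h (norm_nonneg (s⁻¹ : ℝ))
      _ = ‖-c - x‖ := by rw [← norm_smul, e2]
    calc ‖x‖ ≤ ‖-c - x‖ := h2
    _ = ‖x + c‖ := by rw [show (-c - x : EuclideanSpace ℝ (Fin n)) = -(x + c) by abel, norm_neg]
  -- integrability
  have hfint : Integrable f := Helper.gaussianIntegrable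
  have hfp : Integrable (fun x => f (x + c)) := hfint.comp_add_right c
  have hfm : Integrable (fun x => f (x - c)) := hfint.comp_sub_right c
  -- the translated set
  have hset : s⁻¹ • ((fun x => x + y) '' V) = (fun x => x + c) '' W := by
    ext z
    rw [mem_smul_set_iff_inv_smul_mem₀ (inv_ne_zero hsne), inv_inv]
    constructor
    · rintro ⟨v, hv, hveq⟩
      have hveq' : v + y = s • z := hveq
      refine ⟨s⁻¹ • v, (hWmem _).2 (by rwa [smul_inv_smul₀ hsne]), ?_⟩
      have : s⁻¹ • (v + y) = s⁻¹ • (s • z) := by rw [hveq']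
      rwa [smul_add, inv_smul_smul₀ hsne, ← hcdef] at this
    · rintro ⟨w, hw, rfl⟩
      refine ⟨s • w, (hWmem w).1 hw, ?_⟩
      rw [smul_add, smul_inv_smul₀ hsne]
  have hIp : gauss s ((fun x => x + y) '' V) = ∫ x in W, f (x + c) := by
    rw [gauss, hset, Helper.setIntegral_translate W hWmeas c f]
  have hI0 : gauss s V = ∫ x in W, f x := rfl
  -- upper bound
  have hupper : (∫ x in W, f (x + c)) ≤ ∫ x in W, f x := by
    refine setIntegral_mono_on hfp.integrableOn hfint.integrableOn hWmeas fun x hx => ?_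
    have h1 := hub x hx
    have h2 : ‖x‖ ^ 2 ≤ ‖x + c‖ ^ 2 := by nlinarith [norm_nonneg x]
    exact Real.exp_le_exp.2 (by nlinarith [Real.pi_pos])
  -- symmetry: ∫ f(x+c) = ∫ f(x-c)
  have hflip : (∫ x in W, f (x + c)) = ∫ x in W, f (x - c) := by
    rw [Helper.setIntegral_neg_symm W hWmeas hWsymm (fun x => f (x + c))]
    congr 1
    funext x
    rw [hf]
    simp only
    rw [show (-x + c : EuclideanSpace ℝ (Fin n)) = -(x - c) by abel, norm_neg]
  -- lower bound
  have hk : Real.exp (-π * ‖y‖ ^ 2 / s ^ 2) = Real.exp (-π * ‖c‖ ^ 2) := by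
    congr 1
    rw [hcdef, norm_smul, norm_inv, Real.norm_eq_abs, abs_of_pos hs]
    field_simp
  have hlow : 2 * (Real.exp (-π * ‖c‖ ^ 2) * ∫ x in W, f x) ≤ 2 * ∫ x in W, f (x + c) := by
    have hsum : (∫ x in W, f (x + c)) + (∫ x in W, f (x - c))
        = ∫ x in W, (f (x + c) + f (x - c)) :=
      (integral_add hfp.integrableOn hfm.integrableOn).symm
    have hconst : (∫ x in W, 2 * (Real.exp (-π * ‖c‖ ^ 2) * f x))
        = 2 * (Real.exp (-π * ‖c‖ ^ 2) * ∫ x in W, f x) := by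
      rw [integral_const_mul]
      congr 1
      exact integral_const_mul _ _
    have hmono : (∫ x in W, 2 * (Real.exp (-π * ‖c‖ ^ 2) * f x))
        ≤ ∫ x in W, (f (x + c) + f (x - c)) := by
      refine setIntegral_mono_on
        ((hfint.integrableOn.const_mul _).const_mul _)
        (hfp.integrableOn.add hfm.integrableOn) hWmeas fun x _ => ?_
      have hpar : ‖x + c‖ ^ 2 + ‖x - c‖ ^ 2 = 2 * (‖x‖ ^ 2 + ‖c‖ ^ 2) := by
        rw [norm_add_sq_real, norm_sub_sq_real]; ring
      have havg := Helper.exp_avg (-π * ‖x + c‖ ^ 2) (-π * ‖x - c‖ ^ 2)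
      have heq : (-π * ‖x + c‖ ^ 2 + -π * ‖x - c‖ ^ 2) / 2
          = -π * ‖c‖ ^ 2 + -π * ‖x‖ ^ 2 := by
        rw [show -π * ‖x + c‖ ^ 2 + -π * ‖x - c‖ ^ 2
            = -π * (‖x + c‖ ^ 2 + ‖x - c‖ ^ 2) by ring, hpar]
        ring
      rw [heq, Real.exp_add] at havg
      calc 2 * (Real.exp (-π * ‖c‖ ^ 2) * f x)
          = 2 * (Real.exp (-π * ‖c‖ ^ 2) * Real.exp (-π * ‖x‖ ^ 2)) := rfl
        _ ≤ f (x + c) + f (x - c) := havg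
    calc 2 * (Real.exp (-π * ‖c‖ ^ 2) * ∫ x in W, f x)
        = ∫ x in W, 2 * (Real.exp (-π * ‖c‖ ^ 2) * f x) := hconst.symm
      _ ≤ ∫ x in W, (f (x + c) + f (x - c)) := hmono
      _ = (∫ x in W, f (x + c)) + (∫ x in W, f (x - c)) := hsum.symm
      _ = 2 * ∫ x in W, f (x + c) := by rw [← hflip]; ring
  constructor
  · rw [hIp, hI0, hk]; linarith
  · rw [hIp, hI0]; exact hupper
end
end

section
/- For any full-rank lattice L in R^n and any s > 0, gamma_s(V(L)) * rho_s(L) >= exp(-4n)/2, where V(L) is the Voronoi cell of L. -/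
open scoped Real Pointwise
open MeasureTheory Set

noncomputable section

variable {E : Type*} [NormedAddCommGroup E] [InnerProductSpace ℝ E]

section Aux

lemma aux_summable_int {a : ℝ} (ha : 0 < a) :
    Summable fun k : ℤ => Real.exp (-a * (k : ℝ) ^ 2) := by
  have hnat : Summable fun m : ℕ => Real.exp (-a * (m : ℝ) ^ 2) := by
    have hgeo : Summable fun m : ℕ => Real.exp (-a) ^ m :=
      summable_geometric_of_lt_one (Real.exp_pos _).le
        (Real.exp_lt_one_iff.2 (by linarith))
    refine Summable.of_nonneg_of_le (fun m => (Real.exp_pos _).le) (fun m => ?_) hgeo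
    rw [← Real.exp_nat_mul]
    apply Real.exp_le_exp.2
    have h1 : (m : ℝ) ≤ (m : ℝ) ^ 2 := by
      rcases Nat.eq_zero_or_pos m with h | h
      · simp [h]
      · have : (1:ℝ) ≤ (m:ℝ) := by exact_mod_cast h
        nlinarith
    nlinarith
  apply Summable.of_nat_of_neg <;> simpa using hnat

lemma aux_summable_pi {a : ℝ} (ha : 0 < a) (m : ℕ) :
    Summable fun z : Fin m → ℤ => ∏ i, Real.exp (-a * (z i : ℝ) ^ 2) := by
  induction m with
  | zero => exact Summable.of_finite
  | succ m ih =>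
      have key : Summable fun p : ℤ × (Fin m → ℤ) =>
          Real.exp (-a * (p.1 : ℝ) ^ 2) * ∏ i, Real.exp (-a * (p.2 i : ℝ) ^ 2) := by
        apply Summable.mul_of_nonneg (aux_summable_int ha) ih
        · exact fun k => (Real.exp_pos _).le
        · exact fun z => Finset.prod_nonneg fun i _ => (Real.exp_pos _).le
      have h2 : Summable ((fun p : ℤ × (Fin m → ℤ) =>
          Real.exp (-a * (p.1 : ℝ) ^ 2) * ∏ i, Real.exp (-a * (p.2 i : ℝ) ^ 2)) ∘
          (Fin.consEquiv fun _ => ℤ).symm) := (Equiv.summable_iff _).2 key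
      refine h2.congr fun z => ?_
      simp [Function.comp, Fin.prod_univ_succ, Fin.tail]

lemma aux_integrable_rexp {V : Type*} [NormedAddCommGroup V] [InnerProductSpace ℝ V]
    [FiniteDimensional ℝ V] [MeasurableSpace V] [BorelSpace V]
    {b : ℝ} (hb : 0 < b) : Integrable (fun v : V => Real.exp (-b * ‖v‖ ^ 2)) := by
  have h := (GaussianFourier.integrable_cexp_neg_mul_sq_norm_add (V := V)
      (b := (b : ℂ)) (by simpa using hb) 0 0).norm
  refine h.congr (Filter.Eventually.of_forall fun v => ?_)
  simp [Complex.norm_exp]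
  left; norm_cast

end Aux

set_option maxHeartbeats 1000000 in
/-- `γ_s(V(L)) · ρ_s(L) ≥ exp(-4n)/2`. -/
theorem gauss_voronoi_mul_rho_ge {n : ℕ}
    (L : Submodule ℤ (EuclideanSpace ℝ (Fin n))) (hL : IsLatticeOfRank L n)
    (s : ℝ) (hs : 0 < s) :
    Real.exp (-(4 * n)) / 2 ≤
      gauss s (voronoi L) * rhoS s (L : Set (EuclideanSpace ℝ (Fin n))) := by
  classical
  obtain ⟨b, hbli, hbsp⟩ := hL
  -- turn `b` into an `ℝ`-basis
  have hspan : ⊤ ≤ Submodule.span ℝ (Set.range b) := by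
    have h1 : Module.finrank ℝ (Submodule.span ℝ (Set.range b)) =
        Module.finrank ℝ (EuclideanSpace ℝ (Fin n)) := by
      rw [finrank_span_eq_card hbli]
      simp [finrank_euclideanSpace]
    exact ge_of_eq (Submodule.eq_top_of_finrank_eq h1)
  set B : Module.Basis (Fin n) ℝ (EuclideanSpace ℝ (Fin n)) := Module.Basis.mk hbli hspan with hBdef
  have hB : ⇑B = b := Module.Basis.coe_mk _ _
  rw [← hB] at hbsp
  subst hbsp
  set Λ := Submodule.span ℤ (Set.range ⇑B) with hΛ
  set V : Set (EuclideanSpace ℝ (Fin n)) := voronoi Λ with hV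
  set W : Set (EuclideanSpace ℝ (Fin n)) := s⁻¹ • V with hW
  -- closedness of the lattice
  have hLclosed : IsClosed (Λ : Set (EuclideanSpace ℝ (Fin n))) := by
    have := AddSubgroup.isClosed_of_discrete (H := Λ.toAddSubgroup)
    simpa using this
  -- nearest point
  have hnear : ∀ x : EuclideanSpace ℝ (Fin n), ∃ y ∈ Λ, x - y ∈ V := by
    intro x
    obtain ⟨y, hyL, hyd⟩ := hLclosed.exists_infDist_eq_dist ⟨0, by simp⟩ x
    refine ⟨y, hyL, fun y' hy' => ?_⟩
    have h1 : Metric.infDist x (Λ : Set (EuclideanSpace ℝ (Fin n))) ≤ dist x (y + y') :=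
      Metric.infDist_le_dist_of_mem (by simpa using Λ.add_mem (by simpa using hyL) hy')
    rw [hyd] at h1
    simp only [dist_eq_norm] at h1
    have h2 : x - (y + y') = -(y' - (x - y)) := by abel
    rw [h2, norm_neg] at h1
    exact h1
  -- the map from `ℤ^n` onto the lattice
  set ψ : (Fin n → ℤ) → EuclideanSpace ℝ (Fin n) :=
    fun z => B.equivFun.symm (fun i => (z i : ℝ)) with hψ
  have hψmem : ∀ z, ψ z ∈ Λ := by
    intro z
    rw [hψ]
    simp only [Module.Basis.equivFun_symm_apply]
    refine Submodule.sum_mem _ fun i _ => ?_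
    rw [Int.cast_smul_eq_zsmul]
    exact Submodule.smul_mem _ _ (Submodule.subset_span (Set.mem_range_self i))
  have hψinj : Function.Injective ψ := by
    intro z z' h
    have h2 : (fun i => (z i : ℝ)) = fun i => (z' i : ℝ) := B.equivFun.symm.injective h
    funext i
    exact_mod_cast congrFun h2 i
  have hψsurj : ∀ y : (Λ : Set (EuclideanSpace ℝ (Fin n))), ∃ z, ψ z = (y : EuclideanSpace ℝ (Fin n)) := by
    rintro ⟨y, hy⟩
    rw [SetLike.mem_coe, hΛ, Submodule.mem_span_range_iff_exists_fun] at hy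
    obtain ⟨c, hc⟩ := hy
    refine ⟨c, ?_⟩
    rw [hψ]
    simp only [Module.Basis.equivFun_symm_apply]
    rw [← hc]
    exact Finset.sum_congr rfl fun i _ => Int.cast_smul_eq_zsmul ℝ (c i) (B i)
  set e : (Fin n → ℤ) ≃ (Λ : Set (EuclideanSpace ℝ (Fin n))) :=
    Equiv.ofBijective (fun z => ⟨ψ z, hψmem z⟩)
      ⟨fun z z' h => hψinj (congrArg Subtype.val h),
       fun y => by obtain ⟨z, hz⟩ := hψsurj y; exact ⟨z, Subtype.ext hz⟩⟩ with he
  -- summability of the Gaussian mass of the lattice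
  have hsummable : Summable fun y : (Λ : Set (EuclideanSpace ℝ (Fin n))) =>
      Real.exp (-π * ‖(y : EuclideanSpace ℝ (Fin n))‖ ^ 2 / s ^ 2) := by
    rw [← Equiv.summable_iff e]
    set T0 : EuclideanSpace ℝ (Fin n) →L[ℝ] (Fin n → ℝ) :=
      LinearMap.toContinuousLinearMap B.equivFun.toLinearMap with hT0
    set C : ℝ := ‖T0‖ with hC
    have hC0 : 0 ≤ C := norm_nonneg _
    set a : ℝ := π / (s ^ 2 * (n + 1) * (C + 1) ^ 2) with ha
    have ha0 : 0 < a := by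
      rw [ha]; positivity
    have hbound : ∀ z : Fin n → ℤ,
        Real.exp (-π * ‖ψ z‖ ^ 2 / s ^ 2) ≤ ∏ i, Real.exp (-a * (z i : ℝ) ^ 2) := by
      intro z
      have hcoord : ∀ i, |(z i : ℝ)| ≤ (C + 1) * ‖ψ z‖ := by
        intro i
        have h1 : T0 (ψ z) = fun i => (z i : ℝ) := by
          simp only [hT0, hψ, LinearMap.coe_toContinuousLinearMap', LinearEquiv.coe_coe,
            LinearEquiv.apply_symm_apply]
        have h2 : |(z i : ℝ)| = ‖(T0 (ψ z)) i‖ := by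
          rw [h1]; simp
        rw [h2]
        calc ‖(T0 (ψ z)) i‖ ≤ ‖T0 (ψ z)‖ := norm_le_pi_norm _ i
          _ ≤ C * ‖ψ z‖ := T0.le_opNorm _
          _ ≤ (C + 1) * ‖ψ z‖ := by nlinarith [norm_nonneg (ψ z)]
      have hsum : ∑ i, (z i : ℝ) ^ 2 ≤ n * ((C + 1) ^ 2 * ‖ψ z‖ ^ 2) := by
        calc ∑ i, (z i : ℝ) ^ 2 ≤ ∑ _i : Fin n, (C + 1) ^ 2 * ‖ψ z‖ ^ 2 := by
              refine Finset.sum_le_sum fun i _ => ?_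
              have := hcoord i
              nlinarith [abs_nonneg ((z i : ℝ)), sq_abs ((z i : ℝ))]
          _ = n * ((C + 1) ^ 2 * ‖ψ z‖ ^ 2) := by simp [Finset.sum_const, Finset.card_univ]
      rw [← Real.exp_sum]
      apply Real.exp_le_exp.2
      have hexp : ∑ i, -a * (z i : ℝ) ^ 2 = -a * ∑ i, (z i : ℝ) ^ 2 := by
        rw [Finset.mul_sum]
      rw [hexp]
      have h4 : ∑ i, (z i : ℝ) ^ 2 ≤ (n + 1) * (C + 1) ^ 2 * ‖ψ z‖ ^ 2 := by
        nlinarith [hsum, sq_nonneg (C + 1), sq_nonneg (‖ψ z‖), mul_nonneg (sq_nonneg (C+1)) (sq_nonneg (‖ψ z‖))]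
      have h5 : a * ((n + 1) * (C + 1) ^ 2 * ‖ψ z‖ ^ 2) = π * ‖ψ z‖ ^ 2 / s ^ 2 := by
        rw [ha]
        field_simp
      have h6 := mul_le_mul_of_nonneg_left h4 ha0.le
      rw [h5] at h6
      have h7 : -π * ‖ψ z‖ ^ 2 / s ^ 2 = -(π * ‖ψ z‖ ^ 2 / s ^ 2) := by ring
      rw [h7]
      linarith
    refine Summable.of_nonneg_of_le (fun z => (Real.exp_pos _).le)
      (fun z => ?_) (aux_summable_pi ha0 n)
    exact hbound z
  -- shifted copies of `W`
  set c : ↥(Λ : Set (EuclideanSpace ℝ (Fin n))) → EuclideanSpace ℝ (Fin n) :=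
    fun y => s⁻¹ • (y : EuclideanSpace ℝ (Fin n)) with hc
  set T : ↥(Λ : Set (EuclideanSpace ℝ (Fin n))) → Set (EuclideanSpace ℝ (Fin n)) :=
    fun y => (fun x => x + c y) '' W with hT
  have hcover : (⋃ y : (Λ : Set (EuclideanSpace ℝ (Fin n))), T y) = univ := by
    refine eq_univ_of_forall fun x => ?_
    obtain ⟨y, hyL, hyV⟩ := hnear (s • x)
    refine mem_iUnion.2 ⟨⟨y, hyL⟩, ⟨s⁻¹ • (s • x - y), ?_, ?_⟩⟩
    · exact smul_mem_smul_set hyV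
    · show s⁻¹ • (s • x - y) + s⁻¹ • y = x
      rw [smul_sub, smul_smul, inv_mul_cancel₀ hs.ne', one_smul]
      abel
  haveI : Countable (Λ : Set (EuclideanSpace ℝ (Fin n))) := Countable.of_equiv _ e
  -- the Gaussian integrand
  set f5 : EuclideanSpace ℝ (Fin n) → ENNReal :=
    fun x => ENNReal.ofReal (Real.exp (-(5*π) * ‖x‖ ^ 2)) with hf5
  set G : ENNReal := ∫⁻ x in W, ENNReal.ofReal (Real.exp (-π * ‖x‖ ^ 2)) with hG
  have hint5 : Integrable (fun x : EuclideanSpace ℝ (Fin n) => Real.exp (-(5*π) * ‖x‖ ^ 2)) :=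
    aux_integrable_rexp (by positivity)
  have hint1 : Integrable (fun x : EuclideanSpace ℝ (Fin n) => Real.exp (-π * ‖x‖ ^ 2)) :=
    aux_integrable_rexp Real.pi_pos
  have hval5 : ∫ x : EuclideanSpace ℝ (Fin n), Real.exp (-(5*π) * ‖x‖ ^ 2)
      = (1/5 : ℝ) ^ ((n : ℝ)/2) := by
    rw [GaussianFourier.integral_rexp_neg_mul_sq_norm (by positivity)]
    have h1 : π / (5*π) = (1/5 : ℝ) := by
      rw [div_eq_div_iff (by positivity) (by norm_num)]; ring
    rw [h1]
    norm_num [finrank_euclideanSpace]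
  -- translation invariance
  have htrans : ∀ y : (Λ : Set (EuclideanSpace ℝ (Fin n))),
      ∫⁻ x in T y, f5 x = ∫⁻ x in W, f5 (x + c y) := by
    intro y
    exact ((measurePreserving_add_right volume (c y)).setLIntegral_comp_emb
      (MeasurableEquiv.addRight (c y)).measurableEmbedding f5 W).symm
  -- pointwise bound on `W`
  have hpt : ∀ y : (Λ : Set (EuclideanSpace ℝ (Fin n))), ∀ x ∈ W,
      f5 (x + c y) ≤ ENNReal.ofReal (Real.exp (-π * ‖(y : EuclideanSpace ℝ (Fin n))‖ ^ 2 / s ^ 2)) *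
        ENNReal.ofReal (Real.exp (-π * ‖x‖ ^ 2)) := by
    rintro y x ⟨v, hv, rfl⟩
    have hyΛ : (y : EuclideanSpace ℝ (Fin n)) ∈ Λ := y.2
    have h1 : ‖v‖ ≤ ‖v + (y : EuclideanSpace ℝ (Fin n))‖ := by
      have h := hv (-(y : EuclideanSpace ℝ (Fin n))) (Λ.neg_mem hyΛ)
      rwa [show -(y : EuclideanSpace ℝ (Fin n)) - v = -(v + y) by abel, norm_neg] at h
    have hxc : s⁻¹ • v + c y = s⁻¹ • (v + (y : EuclideanSpace ℝ (Fin n))) := by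
      rw [hc, smul_add]
    have hns : ∀ w : EuclideanSpace ℝ (Fin n), ‖s⁻¹ • w‖ = s⁻¹ * ‖w‖ := by
      intro w; rw [norm_smul, Real.norm_eq_abs, abs_of_pos (by positivity)]
    have h2 : ‖s⁻¹ • v‖ ≤ ‖s⁻¹ • v + c y‖ := by
      rw [hxc, hns, hns]
      exact mul_le_mul_of_nonneg_left h1 (by positivity)
    have h3 : ‖c y‖ ≤ 2 * ‖s⁻¹ • v + c y‖ := by
      have ht := norm_add_le (s⁻¹ • v + c y) (-(s⁻¹ • v))
      rw [show s⁻¹ • v + c y + -(s⁻¹ • v) = c y by abel, norm_neg] at ht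
      linarith
    have hcy : ‖c y‖ ^ 2 = ‖(y : EuclideanSpace ℝ (Fin n))‖ ^ 2 / s ^ 2 := by
      rw [hc, hns]
      field_simp
    have hkey : -(5*π) * ‖s⁻¹ • v + c y‖ ^ 2 ≤
        -π * ‖(y : EuclideanSpace ℝ (Fin n))‖ ^ 2 / s ^ 2 + -π * ‖s⁻¹ • v‖ ^ 2 := by
      have h4 : ‖(y : EuclideanSpace ℝ (Fin n))‖ ^ 2 / s ^ 2 = ‖c y‖ ^ 2 := hcy.symm
      have h5 : ‖c y‖ ^ 2 ≤ 4 * ‖s⁻¹ • v + c y‖ ^ 2 := by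
        nlinarith [norm_nonneg (c y), norm_nonneg (s⁻¹ • v + c y)]
      have h6 : ‖s⁻¹ • v‖ ^ 2 ≤ ‖s⁻¹ • v + c y‖ ^ 2 := by
        nlinarith [norm_nonneg (s⁻¹ • v), norm_nonneg (s⁻¹ • v + c y)]
      have hπ := Real.pi_pos
      rw [show -π * ‖(y : EuclideanSpace ℝ (Fin n))‖ ^ 2 / s ^ 2 =
        -π * (‖(y : EuclideanSpace ℝ (Fin n))‖ ^ 2 / s ^ 2) by ring, h4]
      nlinarith
    rw [hf5]
    dsimp only
    rw [← ENNReal.ofReal_mul (Real.exp_pos _).le, ← Real.exp_add]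
    exact ENNReal.ofReal_le_ofReal (Real.exp_le_exp.2 hkey)
  -- integral bound for each translate
  have hcont1 : Continuous fun x : EuclideanSpace ℝ (Fin n) => Real.exp (-π * ‖x‖ ^ 2) :=
    Real.continuous_exp.comp (continuous_const.mul (continuous_norm.pow 2))
  have hIy : ∀ y : (Λ : Set (EuclideanSpace ℝ (Fin n))),
      ∫⁻ x in W, f5 (x + c y) ≤
        ENNReal.ofReal (Real.exp (-π * ‖(y : EuclideanSpace ℝ (Fin n))‖ ^ 2 / s ^ 2)) * G := by
    intro y
    have hmeas : Measurable fun x : EuclideanSpace ℝ (Fin n) =>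
        ENNReal.ofReal (Real.exp (-π * ‖(y : EuclideanSpace ℝ (Fin n))‖ ^ 2 / s ^ 2)) *
          ENNReal.ofReal (Real.exp (-π * ‖x‖ ^ 2)) :=
      (ENNReal.continuous_ofReal.comp hcont1).measurable.const_mul _
    calc ∫⁻ x in W, f5 (x + c y)
        ≤ ∫⁻ x in W, ENNReal.ofReal (Real.exp (-π * ‖(y : EuclideanSpace ℝ (Fin n))‖ ^ 2 / s ^ 2)) *
            ENNReal.ofReal (Real.exp (-π * ‖x‖ ^ 2)) := setLIntegral_mono hmeas (hpt y)
      _ = ENNReal.ofReal (Real.exp (-π * ‖(y : EuclideanSpace ℝ (Fin n))‖ ^ 2 / s ^ 2)) * G := by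
          rw [hG]
          exact lintegral_const_mul _ (ENNReal.continuous_ofReal.comp hcont1).measurable
  have hsum1 : (∑' y : (Λ : Set (EuclideanSpace ℝ (Fin n))),
      ENNReal.ofReal (Real.exp (-π * ‖(y : EuclideanSpace ℝ (Fin n))‖ ^ 2 / s ^ 2)))
      = ENNReal.ofReal (rhoS s (Λ : Set (EuclideanSpace ℝ (Fin n)))) :=
    (ENNReal.ofReal_tsum_of_nonneg (fun _ => (Real.exp_pos _).le) hsummable).symm
  have hGγ : G = ENNReal.ofReal (gauss s (voronoi Λ)) := by
    rw [hG]
    exact (ofReal_integral_eq_lintegral_ofReal hint1.integrableOn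
      (Filter.Eventually.of_forall fun x => (Real.exp_pos _).le)).symm
  have hchain : ENNReal.ofReal ((1/5 : ℝ) ^ ((n : ℝ)/2)) ≤
      ENNReal.ofReal (rhoS s (Λ : Set (EuclideanSpace ℝ (Fin n)))) *
        ENNReal.ofReal (gauss s (voronoi Λ)) := by
    calc ENNReal.ofReal ((1/5 : ℝ) ^ ((n : ℝ)/2)) = ∫⁻ x, f5 x := by
          rw [← hval5]
          exact ofReal_integral_eq_lintegral_ofReal hint5
            (Filter.Eventually.of_forall fun x => (Real.exp_pos _).le)
      _ = ∫⁻ x in ⋃ y : (Λ : Set (EuclideanSpace ℝ (Fin n))), T y, f5 x := by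
          rw [hcover, Measure.restrict_univ]
      _ ≤ ∑' y : (Λ : Set (EuclideanSpace ℝ (Fin n))), ∫⁻ x in T y, f5 x :=
          lintegral_iUnion_le _ _
      _ = ∑' y : (Λ : Set (EuclideanSpace ℝ (Fin n))), ∫⁻ x in W, f5 (x + c y) :=
          tsum_congr htrans
      _ ≤ ∑' y : (Λ : Set (EuclideanSpace ℝ (Fin n))),
            ENNReal.ofReal (Real.exp (-π * ‖(y : EuclideanSpace ℝ (Fin n))‖ ^ 2 / s ^ 2)) * G :=
          ENNReal.tsum_le_tsum hIy
      _ = (∑' y : (Λ : Set (EuclideanSpace ℝ (Fin n))),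
            ENNReal.ofReal (Real.exp (-π * ‖(y : EuclideanSpace ℝ (Fin n))‖ ^ 2 / s ^ 2))) * G :=
          ENNReal.tsum_mul_right
      _ = _ := by rw [hsum1, hGγ]
  have hρ0 : 0 ≤ rhoS s (Λ : Set (EuclideanSpace ℝ (Fin n))) :=
    tsum_nonneg fun _ => (Real.exp_pos _).le
  have hγ0 : 0 ≤ gauss s (voronoi Λ) := integral_nonneg fun x => (Real.exp_pos _).le
  rw [← ENNReal.ofReal_mul hρ0] at hchain
  have hfin : (1/5 : ℝ) ^ ((n : ℝ)/2) ≤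
      rhoS s (Λ : Set (EuclideanSpace ℝ (Fin n))) * gauss s (voronoi Λ) :=
    (ENNReal.ofReal_le_ofReal_iff (mul_nonneg hρ0 hγ0)).1 hchain
  have hnum : Real.exp (-(4*(n:ℝ))) / 2 ≤ (1/5 : ℝ) ^ ((n : ℝ)/2) := by
    rw [Real.rpow_def_of_pos (by norm_num)]
    have hlog : Real.log (1/5) = -Real.log 5 := by rw [one_div, Real.log_inv]
    rw [hlog]
    have h5 : Real.log 5 ≤ 4 := by
      have := Real.log_le_sub_one_of_pos (by norm_num : (0:ℝ) < 5); linarith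
    have h5' : 0 ≤ Real.log 5 := Real.log_nonneg (by norm_num)
    have hle : -(4*(n:ℝ)) ≤ -Real.log 5 * ((n:ℝ)/2) := by nlinarith [(Nat.cast_nonneg n : (0:ℝ) ≤ (n:ℝ))]
    have h6 := Real.exp_le_exp.2 hle
    have hp := Real.exp_pos (-(4*(n:ℝ)))
    linarith
  calc Real.exp (-(4*(n:ℝ))) / 2 ≤ (1/5 : ℝ) ^ ((n : ℝ)/2) := hnum
    _ ≤ rhoS s (Λ : Set (EuclideanSpace ℝ (Fin n))) * gauss s (voronoi Λ) := hfin
    _ = gauss s (voronoi Λ) * rhoS s (Λ : Set (EuclideanSpace ℝ (Fin n))) := mul_comm _ _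
end
end

section
/- For all real x > 1, exp(-2*(log x)^2) + exp(-2*(log(x/(x-1)))^2) < 1. -/
open scoped Real Pointwise
open MeasureTheory Set

noncomputable section

variable {E : Type*} [NormedAddCommGroup E] [InnerProductSpace ℝ E]

private lemma aux_exp_pow (w : ℝ) (hw : 0 ≤ w) :
    Real.exp (-w) ≤ ((1 + w / 40) ^ (40 : ℕ))⁻¹ := by
  have h1 : 1 + w / 40 ≤ Real.exp (w / 40) := by
    have := Real.add_one_le_exp (w / 40); linarith
  have h0 : (0:ℝ) ≤ 1 + w / 40 := by positivity
  have h2 : (1 + w / 40) ^ (40 : ℕ) ≤ Real.exp (w / 40) ^ (40 : ℕ) :=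
    pow_le_pow_left₀ h0 h1 40
  have h3 : Real.exp (w / 40) ^ (40 : ℕ) = Real.exp w := by
    rw [← Real.exp_nat_mul]; congr 1; push_cast; ring
  rw [h3] at h2
  have hpos : (0:ℝ) < (1 + w / 40) ^ (40 : ℕ) := by positivity
  rw [Real.exp_neg]
  exact inv_anti₀ hpos h2

private lemma aux_log_ge (c z : ℝ) (hc : 0 ≤ c) (hc1 : c ≤ 1) (hz : 0 < z)
    (h : 1 ≤ (1 - c / 40) ^ (40 : ℕ) * z) : c ≤ Real.log z := by
  have hpos : (0:ℝ) < 1 - c / 40 := by linarith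
  have h1 : (1 - c / 40) * Real.exp (c / 40) ≤ 1 := by
    have h2 : 1 - c / 40 ≤ Real.exp (-(c / 40)) := by
      have := Real.add_one_le_exp (-(c / 40)); linarith
    have h3 := mul_le_mul_of_nonneg_right h2 (Real.exp_pos (c / 40)).le
    rwa [← Real.exp_add, neg_add_cancel, Real.exp_zero] at h3
  have h4 : ((1 - c / 40) * Real.exp (c / 40)) ^ (40 : ℕ) ≤ 1 := by
    have hnn : (0:ℝ) ≤ (1 - c / 40) * Real.exp (c / 40) := by positivity
    calc ((1 - c / 40) * Real.exp (c / 40)) ^ (40 : ℕ) ≤ 1 ^ (40 : ℕ) :=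
          pow_le_pow_left₀ hnn h1 40
      _ = 1 := one_pow 40
  have h5 : (1 - c / 40) ^ (40 : ℕ) * Real.exp c ≤ 1 := by
    have h6 : Real.exp (c / 40) ^ (40 : ℕ) = Real.exp c := by
      rw [← Real.exp_nat_mul]; congr 1; push_cast; ring
    calc (1 - c / 40) ^ (40 : ℕ) * Real.exp c
        = ((1 - c / 40) * Real.exp (c / 40)) ^ (40 : ℕ) := by rw [mul_pow, h6]
      _ ≤ 1 := h4
  have hppos : (0:ℝ) < (1 - c / 40) ^ (40 : ℕ) := by positivity
  have h7 : Real.exp c ≤ z := by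
    have := le_trans h5 h
    exact le_of_mul_le_mul_left this hppos
  exact (Real.le_log_iff_exp_le hz).mpr h7

private lemma case_bound (a c r : ℝ) (ha : 0 < a) (hc : 0 ≤ c) (hc1 : c ≤ 1)
    (har : a ≤ r) (h : 1 ≤ (1 - c / 40) ^ (40 : ℕ) * r⁻¹) :
    Real.exp (-2 * Real.log a ^ 2) ≤ ((1 + 2 * c ^ 2 / 40) ^ (40 : ℕ))⁻¹ := by
  have hr : 0 < r := lt_of_lt_of_le ha har
  have hinv : r⁻¹ ≤ a⁻¹ := by
    apply inv_anti₀ ha har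
  have h2 : 1 ≤ (1 - c / 40) ^ (40 : ℕ) * a⁻¹ := by
    have hp : (0:ℝ) ≤ (1 - c / 40) ^ (40 : ℕ) := by
      have : (0:ℝ) < 1 - c / 40 := by linarith
      positivity
    nlinarith [mul_le_mul_of_nonneg_left hinv hp]
  have hs : c ≤ Real.log a⁻¹ := aux_log_ge c a⁻¹ hc hc1 (inv_pos.mpr ha) h2
  rw [Real.log_inv] at hs
  have hsq : c ^ 2 ≤ Real.log a ^ 2 := by nlinarith
  have h3 : Real.exp (-2 * Real.log a ^ 2) ≤ Real.exp (-(2 * c ^ 2)) := by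
    apply Real.exp_le_exp.mpr; linarith
  calc Real.exp (-2 * Real.log a ^ 2) ≤ Real.exp (-(2 * c ^ 2)) := h3
    _ ≤ ((1 + 2 * c ^ 2 / 40) ^ (40 : ℕ))⁻¹ := aux_exp_pow _ (by positivity)

set_option maxHeartbeats 1600000 in
private lemma key_ineq (a b : ℝ) (ha : 0 < a) (hab : a + b = 1) (hle : a ≤ b) :
    Real.exp (-2 * Real.log a ^ 2) + Real.exp (-2 * Real.log b ^ 2) < 1 := by
  have ha2 : a ≤ 1 / 2 := by linarith
  have hb2 : (1:ℝ) / 2 ≤ b := by linarith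
  have hb0 : 0 < b := by linarith
  have hb1 : b < 1 := by linarith
  rcases le_or_gt a (9 / 25) with hcase | hcase
  · -- Case 1 : a ≤ 0.36
    have hbge : (16:ℝ) / 25 ≤ b := by linarith
    -- s := -log a ≥ 1
    have he1 : (9:ℝ) / 25 < Real.exp (-1) := by
      have hm : Real.exp (-1) * Real.exp 1 = 1 := by
        rw [← Real.exp_add]; norm_num
      have hlt : Real.exp 1 < 25 / 9 :=
        lt_trans Real.exp_one_lt_d9 (by norm_num)
      nlinarith [Real.exp_pos 1, Real.exp_pos (-1 : ℝ)]
    have hs1 : Real.log a < -1 := by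
      have := Real.log_lt_log ha (lt_of_le_of_lt hcase he1)
      rwa [Real.log_exp] at this
    -- exp (-2 log a ^ 2) ≤ a ^ 2
    have hA : Real.exp (-2 * Real.log a ^ 2) ≤ a ^ 2 := by
      have h1 : -2 * Real.log a ^ 2 ≤ 2 * Real.log a := by nlinarith
      calc Real.exp (-2 * Real.log a ^ 2) ≤ Real.exp (2 * Real.log a) :=
            Real.exp_le_exp.mpr h1
        _ = a ^ 2 := by
            rw [two_mul, Real.exp_add, Real.exp_log ha]; ring
    -- t := -log b ∈ (0, 1/2)
    set t : ℝ := -Real.log b with htdef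
    have ht0 : 0 < t := by
      have := Real.log_neg hb0 hb1
      simp only [htdef]; linarith
    clear_value t
    have hehalf : Real.exp (-(1/2) : ℝ) < 16 / 25 := by
      set c := Real.exp (-(1/2) : ℝ) with hcdef
      have hcpos : 0 < c := Real.exp_pos _
      have hcsq : c ^ 2 = Real.exp (-1) := by
        rw [hcdef, sq, ← Real.exp_add]; norm_num
      have h1 : Real.exp (-1 : ℝ) < 10 / 27 := by
        have hm : Real.exp (-1) * Real.exp 1 = 1 := by
          rw [← Real.exp_add]; norm_num
        have hgt : (27:ℝ) / 10 < Real.exp 1 :=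
          lt_trans (by norm_num) Real.exp_one_gt_d9
        nlinarith [Real.exp_pos 1, Real.exp_pos (-1 : ℝ)]
      nlinarith
    have ht12 : t < 1 / 2 := by
      have hblt : Real.exp (-(1/2):ℝ) < b := lt_of_lt_of_le hehalf hbge
      have := Real.log_lt_log (Real.exp_pos _) hblt
      rw [Real.log_exp] at this
      simp only [htdef]; linarith
    have hbt : b = Real.exp (-t) := by
      simp only [htdef, neg_neg]; rw [Real.exp_log hb0]
    -- bounds
    have hB : Real.exp (-2 * Real.log b ^ 2) * (1 + 2 * t ^ 2) ≤ 1 := by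
      have h1 : Real.log b ^ 2 = t ^ 2 := by simp [htdef]
      have h2 : 1 + 2 * t ^ 2 ≤ Real.exp (2 * t ^ 2) := by
        have := Real.add_one_le_exp (2 * t ^ 2); linarith
      have h3 : Real.exp (-2 * Real.log b ^ 2) * Real.exp (2 * t ^ 2) = 1 := by
        rw [h1, ← Real.exp_add]; ring_nf; exact Real.exp_zero
      nlinarith [Real.exp_pos (-2 * Real.log b ^ 2), Real.exp_pos (2 * t ^ 2)]
    have hblb : 1 - t ≤ b := by
      rw [hbt]
      have := Real.add_one_le_exp (-t); linarith
    have hat : a ≤ t := by linarith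
    have hsq2 : a ^ 2 ≤ t ^ 2 := by nlinarith
    -- final polynomial step : 1/(1+2t²) < (1-a)(1+a)
    have h4 : t ^ 2 < 1 / 4 := by nlinarith
    have htsq : 0 < t ^ 2 := pow_pos ht0 2
    have h6 : t ^ 2 * a ^ 2 ≤ t ^ 2 * t ^ 2 :=
      mul_le_mul_of_nonneg_left hsq2 (sq_nonneg t)
    have h7 : t ^ 2 * t ^ 2 < 1 / 4 * t ^ 2 := mul_lt_mul_of_pos_right h4 htsq
    have hfin : 1 < (1 + 2 * t ^ 2) * ((1 - a) * (1 + a)) := by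
      have hexp : (1 + 2 * t ^ 2) * ((1 - a) * (1 + a))
          = 1 + 2 * t ^ 2 - a ^ 2 - 2 * (t ^ 2 * a ^ 2) := by ring
      rw [hexp]
      linarith
    have hBpos : (0:ℝ) < 1 + 2 * t ^ 2 := by positivity
    have hB2 : Real.exp (-2 * Real.log b ^ 2) < (1 - a) * (1 + a) := by
      by_contra hcon
      push_neg at hcon
      have := mul_le_mul_of_nonneg_left hcon (le_of_lt hBpos)
      linarith
    nlinarith
  · -- Case 2 : 9/25 < a ≤ 1/2
    rcases le_or_gt a (9 / 20) with hsub | hsub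
    · -- Case 2b : 9/25 < a ≤ 9/20, so 11/20 ≤ b < 16/25
      have hbub : b ≤ 16 / 25 := by linarith
      have hA := case_bound a (79 / 100) (9 / 20) ha (by norm_num) (by norm_num) hsub
        (by norm_num)
      have hB := case_bound b (221 / 500) (16 / 25) hb0 (by norm_num) (by norm_num) hbub
        (by norm_num)
      have : ((1 + 2 * ((79:ℝ) / 100) ^ 2 / 40) ^ (40 : ℕ))⁻¹
          + ((1 + 2 * ((221:ℝ) / 500) ^ 2 / 40) ^ (40 : ℕ))⁻¹ < 1 := by norm_num
      linarith
    · -- Case 2a : 9/20 < a ≤ 1/2, so 1/2 ≤ b < 11/20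
      have hbub : b ≤ 11 / 20 := by linarith
      have hA := case_bound a (137 / 200) (1 / 2) ha (by norm_num) (by norm_num) ha2
        (by norm_num)
      have hB := case_bound b (59 / 100) (11 / 20) hb0 (by norm_num) (by norm_num) hbub
        (by norm_num)
      have : ((1 + 2 * ((137:ℝ) / 200) ^ 2 / 40) ^ (40 : ℕ))⁻¹
          + ((1 + 2 * ((59:ℝ) / 100) ^ 2 / 40) ^ (40 : ℕ))⁻¹ < 1 := by norm_num
      linarith

/-- For all `x > 1`,
`exp(-2 log² x) + exp(-2 log²(x/(x-1))) < 1`. -/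
theorem exp_log_sq_add_exp_log_sq_lt_one (x : ℝ) (hx : 1 < x) :
    Real.exp (-2 * Real.log x ^ 2) +
      Real.exp (-2 * Real.log (x / (x - 1)) ^ 2) < 1 := by
  have hx0 : (0:ℝ) < x := by linarith
  have hx1 : (0:ℝ) < x - 1 := by linarith
  have hp0 : 0 < x⁻¹ := by positivity
  have hq0 : 0 < (x - 1) / x := by positivity
  have hpq : x⁻¹ + (x - 1) / x = 1 := by field_simp; ring
  have h1 : Real.log x ^ 2 = Real.log x⁻¹ ^ 2 := by
    rw [Real.log_inv]; ring
  have h2 : Real.log (x / (x - 1)) ^ 2 = Real.log ((x - 1) / x) ^ 2 := by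
    rw [show x / (x - 1) = ((x - 1) / x)⁻¹ by rw [inv_div], Real.log_inv]; ring
  rw [h1, h2]
  rcases le_total x⁻¹ ((x - 1) / x) with h | h
  · exact key_ineq _ _ hp0 hpq h
  · have := key_ineq _ _ hq0 (by linarith) h
    linarith
end
end

section
/- Let 0 < a_1 < a_2 < ... < a_k be reals and d_1, ..., d_k positive integers, and set m_j = sum over i >= j of d_i. Then sum over i of d_i * a_i <= 2e * ceil(log(2*m_1)) * max over j of m_j * (product over i >= j of a_i^{d_i})^{1/m_j}. -/
open scoped Real Pointwise
open MeasureTheory Set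

noncomputable section

variable {E : Type*} [NormedAddCommGroup E] [InnerProductSpace ℝ E]

/-- Reverse AM-GM. -/
theorem reverse_am_gm (k : ℕ) (hk : 0 < k) (a : Fin k → ℝ) (d : Fin k → ℕ)
    (ha : StrictMono a) (hapos : ∀ i, 0 < a i) (hd : ∀ i, 1 ≤ d i)
    (m : Fin k → ℕ) (hm : ∀ j, m j = ∑ i ∈ Finset.Ici j, d i) :
    ∑ i, (d i : ℝ) * a i ≤
      2 * Real.exp 1 * (⌈Real.log (2 * (m ⟨0, hk⟩ : ℝ))⌉ : ℝ) *
        (⨆ j : Fin k, (m j : ℝ) *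
          (∏ i ∈ Finset.Ici j, a i ^ d i) ^ ((m j : ℝ)⁻¹)) := by
  obtain ⟨k', rfl⟩ : ∃ k', k = k' + 1 := ⟨k - 1, (Nat.succ_pred_eq_of_pos hk).symm⟩
  have hmpos : ∀ j, 0 < m j := fun j => by
    rw [hm]
    exact Finset.sum_pos (fun i _ => hd i) ⟨j, Finset.mem_Ici.2 le_rfl⟩
  set W : ℝ := ⨆ j : Fin (k' + 1), (m j : ℝ) *
      (∏ i ∈ Finset.Ici j, a i ^ d i) ^ ((m j : ℝ)⁻¹) with hWdef
  have hGM : ∀ j, a j ≤ (∏ i ∈ Finset.Ici j, a i ^ d i) ^ ((m j : ℝ)⁻¹) := by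
    intro j
    have h1 : (a j) ^ (m j) ≤ ∏ i ∈ Finset.Ici j, a i ^ d i := by
      rw [hm, ← Finset.prod_pow_eq_pow_sum]
      exact Finset.prod_le_prod (fun i _ => pow_nonneg (hapos j).le _)
        (fun i hi => pow_le_pow_left₀ (hapos j).le (ha.monotone (Finset.mem_Ici.1 hi)) _)
    have h2 := Real.rpow_le_rpow (z := ((m j : ℝ))⁻¹) (pow_nonneg (hapos j).le _) h1
      (inv_nonneg.2 (Nat.cast_nonneg (m j)))
    rwa [← Real.rpow_natCast (a j) (m j), ← Real.rpow_mul (hapos j).le,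
      mul_inv_cancel₀ (by exact_mod_cast (hmpos j).ne'), Real.rpow_one] at h2
  have hW_ge : ∀ j, (m j : ℝ) * a j ≤ W := by
    intro j
    refine le_trans (mul_le_mul_of_nonneg_left (hGM j) (by positivity)) ?_
    rw [hWdef]
    exact le_ciSup (f := fun j : Fin (k' + 1) => (m j : ℝ) *
      (∏ i ∈ Finset.Ici j, a i ^ d i) ^ ((m j : ℝ)⁻¹))
      (Set.Finite.bddAbove (Set.finite_range _)) j
  have hW0 : 0 ≤ W := by
    refine le_trans ?_ (hW_ge ⟨0, hk⟩)
    have h1 := hmpos ⟨0, hk⟩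
    have h2 := hapos ⟨0, hk⟩
    positivity
  have hstep : ∀ i, (d i : ℝ) * a i ≤ ((d i : ℝ) / (m i : ℝ)) * W := by
    intro i
    have hmi : (0:ℝ) < (m i : ℝ) := by exact_mod_cast hmpos i
    have h := mul_le_mul_of_nonneg_left (hW_ge i)
      (by positivity : (0:ℝ) ≤ (d i : ℝ) / (m i : ℝ))
    calc (d i : ℝ) * a i = ((d i : ℝ) / (m i : ℝ)) * ((m i : ℝ) * a i) := by
          field_simp
      _ ≤ _ := h
  have key : ∑ i, (d i : ℝ) * a i ≤ (∑ i, (d i : ℝ) / (m i : ℝ)) * W := by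
    rw [Finset.sum_mul]
    exact Finset.sum_le_sum fun i _ => hstep i
  -- bound the ratio sum by 1 + log m₀
  set F : ℕ → ℝ := fun n => if h : n < k' + 1 then (d ⟨n, h⟩ : ℝ) / (m ⟨n, h⟩ : ℝ) else 0
    with hFdef
  set g : ℕ → ℝ := fun n => if h : n < k' + 1 then Real.log (m ⟨n, h⟩ : ℝ) else 0 with hgdef
  have hFsum : ∑ i : Fin (k' + 1), (d i : ℝ) / (m i : ℝ) = ∑ n ∈ Finset.range (k' + 1), F n := by
    rw [← Fin.sum_univ_eq_sum_range]
    refine Finset.sum_congr rfl fun i _ => ?_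
    simp [hFdef, i.isLt]
    have := i.isLt
    omega
  have hrec : ∀ n (h1 : n + 1 < k' + 1), m ⟨n, by omega⟩ = d ⟨n, by omega⟩ + m ⟨n + 1, h1⟩ := by
    intro n h1
    have hins : Finset.Ici (⟨n, by omega⟩ : Fin (k' + 1)) =
        insert ⟨n, by omega⟩ (Finset.Ici ⟨n + 1, h1⟩) := by
      ext i
      simp only [Finset.mem_Ici, Finset.mem_insert, Fin.le_def, Fin.ext_iff]
      omega
    rw [hm, hm, hins, Finset.sum_insert]
    simp only [Finset.mem_Ici, Fin.le_def]
    omega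
  have hFle : ∀ n, n + 1 < k' + 1 → F n ≤ g n - g (n + 1) := by
    intro n h1
    have hn : n < k' + 1 := by omega
    have hx : (1:ℝ) ≤ (d ⟨n, hn⟩ : ℝ) := by exact_mod_cast hd ⟨n, hn⟩
    have hy : (0:ℝ) < (m ⟨n + 1, h1⟩ : ℝ) := by exact_mod_cast hmpos ⟨n + 1, h1⟩
    have hsum : (m ⟨n, hn⟩ : ℝ) = (d ⟨n, hn⟩ : ℝ) + (m ⟨n + 1, h1⟩ : ℝ) := by
      exact_mod_cast hrec n h1
    set x := (d ⟨n, hn⟩ : ℝ)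
    set y := (m ⟨n + 1, h1⟩ : ℝ)
    have hxy : (0:ℝ) < x + y := by linarith
    have hlog : Real.log (y / (x + y)) ≤ y / (x + y) - 1 :=
      Real.log_le_sub_one_of_pos (by positivity)
    rw [Real.log_div hy.ne' hxy.ne'] at hlog
    have hF : F n = x / (x + y) := by simp [hFdef, hn, hsum, show n ≤ k' by omega]; rfl
    have hg : g n - g (n + 1) = Real.log (x + y) - Real.log y := by
      simp [hgdef, hn, h1, hsum, show n ≤ k' by omega, show n < k' by omega]; rfl
    rw [hF, hg]
    have : y / (x + y) - 1 = -(x / (x + y)) := by field_simp; ring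
    linarith [this ▸ hlog]
  have hlast : F k' = 1 := by
    have hlt : k' < k' + 1 := by omega
    have hmd : m ⟨k', hlt⟩ = d ⟨k', hlt⟩ := by
      rw [hm]
      have : Finset.Ici (⟨k', hlt⟩ : Fin (k' + 1)) = {⟨k', hlt⟩} := by
        ext i
        simp only [Finset.mem_Ici, Finset.mem_singleton, Fin.le_def, Fin.ext_iff]
        omega
      rw [this, Finset.sum_singleton]
    have hdne : (d ⟨k', hlt⟩ : ℝ) ≠ 0 := by
      have := hd ⟨k', hlt⟩; positivity
    simp [hFdef, hlt, hmd, div_self hdne]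
  have hratio : ∑ n ∈ Finset.range (k' + 1), F n ≤ 1 + Real.log (m ⟨0, hk⟩ : ℝ) := by
    rw [Finset.sum_range_succ, hlast]
    have htel : ∑ n ∈ Finset.range k', F n ≤ g 0 - g k' := by
      rw [← Finset.sum_range_sub' g k']
      exact Finset.sum_le_sum fun n hn => hFle n (by
        have := Finset.mem_range.1 hn; omega)
    have hg0 : g 0 = Real.log (m ⟨0, hk⟩ : ℝ) := by simp [hgdef, hk]
    have hgk : 0 ≤ g k' := by
      have hlt : k' < k' + 1 := by omega
      have h1 : (1:ℝ) ≤ (m ⟨k', hlt⟩ : ℝ) := by exact_mod_cast hmpos ⟨k', hlt⟩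
      simp only [hgdef, hlt, dif_pos]
      exact Real.log_nonneg h1
    linarith
  -- final numeric bound
  have hm1 : (1:ℝ) ≤ (m ⟨0, hk⟩ : ℝ) := by exact_mod_cast hmpos ⟨0, hk⟩
  set T := (⌈Real.log (2 * (m ⟨0, hk⟩ : ℝ))⌉ : ℝ) with hTdef
  have hlogpos : 0 < Real.log (2 * (m ⟨0, hk⟩ : ℝ)) := by
    apply Real.log_pos; linarith
  have hT1 : (1:ℝ) ≤ T := by
    rw [hTdef]; exact_mod_cast Int.one_le_ceil_iff.2 hlogpos
  have hTge : Real.log (m ⟨0, hk⟩ : ℝ) ≤ T := by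
    refine le_trans ?_ (Int.le_ceil _)
    apply Real.log_le_log (by linarith)
    linarith
  have he : (1:ℝ) ≤ Real.exp 1 := by
    have := Real.add_one_le_exp 1; linarith
  have hfinal : 1 + Real.log (m ⟨0, hk⟩ : ℝ) ≤ 2 * Real.exp 1 * T := by
    nlinarith
  calc ∑ i, (d i : ℝ) * a i ≤ (∑ i, (d i : ℝ) / (m i : ℝ)) * W := key
    _ ≤ (2 * Real.exp 1 * T) * W := by
        apply mul_le_mul_of_nonneg_right _ hW0
        rw [hFsum]
        exact hratio.trans hfinal
    _ = 2 * Real.exp 1 * T * W := by ring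
end
end
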